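/- If g, f: S → S are pei-injections of an orthohedral set S of rank n, then the height of the composition satisfies h(gf) = h(g) + h(f), where h(f) := h(S − f(S)) is the number of rank-(n−1) germs of the complement of the image. -/

import Mathlib

open Pointwise

namespace PeiPaper

/-- Points of the face of the standard orthant spanned by the canonical basis vectors in `Y`. -/
def stdFace (N : ℕ) (Y : Finset (Fin N)) : Set (Fin N → ℤ) :=
  {v | (∀ i, 0 ≤ v i) ∧ ∀ i, i ∉ Y → v i = 0}

/-- Integral orthogonal matrix. -/
def IsOrthMat {N : ℕ} (A : Matrix (Fin N) (Fin N) ℤ) : Prop :=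
  A * A.transpose = 1

/-- `L` is an integral orthant of rank `k` in `ℤ^N`: an affine-orthogonal image of a
rank-`k` face of the standard orthant. -/
def IsOrthantOfRank {N : ℕ} (L : Set (Fin N → ℤ)) (k : ℕ) : Prop :=
  ∃ (a : Fin N → ℤ) (A : Matrix (Fin N) (Fin N) ℤ) (Y : Finset (Fin N)),
    IsOrthMat A ∧ Y.card = k ∧ L = (fun v => a + A.mulVec v) '' stdFace N Y

def IsOrthant {N : ℕ} (L : Set (Fin N → ℤ)) : Prop := ∃ k, IsOrthantOfRank L k

/-- `S` is orthohedral: a finite union of integral orthants. -/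
def IsOrthohedral {N : ℕ} (S : Set (Fin N → ℤ)) : Prop :=
  ∃ 𝓛 : Set (Set (Fin N → ℤ)), 𝓛.Finite ∧ (∀ L ∈ 𝓛, IsOrthant L) ∧ S = ⋃₀ 𝓛

/-- The rank of a set: the maximal rank of an orthant contained in it. -/
noncomputable def orthRank {N : ℕ} (S : Set (Fin N → ℤ)) : ℕ :=
  sSup {k | ∃ L, IsOrthantOfRank L k ∧ L ⊆ S}

/-- Commensurability: the intersection is nonempty and has the same rank as both sets. -/
def Commensurable {N : ℕ} (L L' : Set (Fin N → ℤ)) : Prop :=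
  (L ∩ L').Nonempty ∧ orthRank L = orthRank (L ∩ L') ∧ orthRank L' = orthRank (L ∩ L')

/-- The rank-`k` orthants contained in `S`. -/
def germSet {N : ℕ} (S : Set (Fin N → ℤ)) (k : ℕ) : Set (Set (Fin N → ℤ)) :=
  {L | IsOrthantOfRank L k ∧ L ⊆ S}

/-- The rank-`k` germs of `S`: commensurability classes of rank-`k` orthants of `S`. -/
def Germ {N : ℕ} (S : Set (Fin N → ℤ)) (k : ℕ) : Type _ :=
  Quot (fun L L' : germSet S k => Commensurable L.1 L'.1)

def germOf {N : ℕ} (S : Set (Fin N → ℤ)) (k : ℕ) (L : germSet S k) : Germ S k :=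
  Quot.mk _ L

/-- The number of rank-`k` germs of `S` (as a natural number; `0` if infinite). -/
noncomputable def heightAt {N : ℕ} (S : Set (Fin N → ℤ)) (k : ℕ) : ℕ :=
  Nat.card (Germ S k)

/-- The height of an orthohedral set: the number of germs of maximal rank. -/
noncomputable def height {N : ℕ} (S : Set (Fin N → ℤ)) : ℕ :=
  heightAt S (orthRank S)

/-- `f` is (the restriction of) an isometry of `ℤ^N` on `L`. -/
def IsometricOn {N : ℕ} (f : (Fin N → ℤ) → (Fin N → ℤ)) (L : Set (Fin N → ℤ)) : Prop :=
  ∃ (a : Fin N → ℤ) (A : Matrix (Fin N) (Fin N) ℤ),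
    IsOrthMat A ∧ ∀ x ∈ L, f x = a + A.mulVec x

/-- `f` is (the restriction of) a translation on `L`. -/
def TranslationOn {N : ℕ} (f : (Fin N → ℤ) → (Fin N → ℤ)) (L : Set (Fin N → ℤ)) : Prop :=
  ∃ a : Fin N → ℤ, ∀ x ∈ L, f x = a + x

/-- `f` is a piecewise-Euclidean-isometric map on `S`. -/
def IsPeiMapOn {N : ℕ} (S : Set (Fin N → ℤ)) (f : (Fin N → ℤ) → (Fin N → ℤ)) : Prop :=
  ∃ 𝓛 : Set (Set (Fin N → ℤ)), 𝓛.Finite ∧ (∀ L ∈ 𝓛, IsOrthant L) ∧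
    S = ⋃₀ 𝓛 ∧ 𝓛.PairwiseDisjoint id ∧ ∀ L ∈ 𝓛, IsometricOn f L

/-- `f` is a piecewise-Euclidean-translation map on `S`. -/
def IsPetMapOn {N : ℕ} (S : Set (Fin N → ℤ)) (f : (Fin N → ℤ) → (Fin N → ℤ)) : Prop :=
  ∃ 𝓛 : Set (Set (Fin N → ℤ)), 𝓛.Finite ∧ (∀ L ∈ 𝓛, IsOrthant L) ∧
    S = ⋃₀ 𝓛 ∧ 𝓛.PairwiseDisjoint id ∧ ∀ L ∈ 𝓛, TranslationOn f L

def IsPeiIso {N : ℕ} (S S' : Set (Fin N → ℤ)) (f : (Fin N → ℤ) → (Fin N → ℤ)) : Prop :=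
  IsPeiMapOn S f ∧ Set.InjOn f S ∧ f '' S = S'

def PeiIsomorphic {N : ℕ} (S S' : Set (Fin N → ℤ)) : Prop := ∃ f, IsPeiIso S S' f

def IsPetIso {N : ℕ} (S S' : Set (Fin N → ℤ)) (f : (Fin N → ℤ) → (Fin N → ℤ)) : Prop :=
  IsPetMapOn S f ∧ Set.InjOn f S ∧ f '' S = S'

def PetIsomorphic {N : ℕ} (S S' : Set (Fin N → ℤ)) : Prop := ∃ f, IsPetIso S S' f

/-- A pei-permutation of `S`: a permutation of `ℤ^N` supported on `S` which is pei on `S`. -/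
def IsPeiPerm {N : ℕ} (S : Set (Fin N → ℤ)) (g : Equiv.Perm (Fin N → ℤ)) : Prop :=
  IsPeiMapOn S ⇑g ∧ ∀ x ∉ S, g x = x

/-- The element `g` has rank at most `k`: it is supported on an orthohedral set of rank `≤ k`. -/
def rankLE {N : ℕ} (g : Equiv.Perm (Fin N → ℤ)) (k : ℕ) : Prop :=
  ∃ T : Set (Fin N → ℤ), IsOrthohedral T ∧ orthRank T ≤ k ∧ ∀ x ∉ T, g x = x

/-- `g` fixes every rank-`k` germ of `S`. -/
def FixesGerm {N : ℕ} (S : Set (Fin N → ℤ)) (k : ℕ) (g : Equiv.Perm (Fin N → ℤ)) : Prop :=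
  ∀ L, IsOrthantOfRank L k → L ⊆ S →
    ∃ L', IsOrthantOfRank L' k ∧ L' ⊆ L ∧ Commensurable L L' ∧
      IsometricOn (⇑g) L' ∧ Commensurable (⇑g '' L') L

/-- `g` fixes every rank-`k` germ of `S` and acts on its tangent coset by a translation. -/
def TranslatesGerm {N : ℕ} (S : Set (Fin N → ℤ)) (k : ℕ) (g : Equiv.Perm (Fin N → ℤ)) : Prop :=
  ∀ L, IsOrthantOfRank L k → L ⊆ S →
    ∃ L' a, IsOrthantOfRank L' k ∧ L' ⊆ L ∧ Commensurable L L' ∧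
      (∀ x ∈ L', g x = a + x) ∧ Commensurable (⇑g '' L') L

/-- `σ` is the map induced by `g` on the rank-`k` germs of `S`. -/
def InducesGermMap {N : ℕ} (S : Set (Fin N → ℤ)) (k : ℕ) (g : Equiv.Perm (Fin N → ℤ))
    (σ : Germ S k → Germ S k) : Prop :=
  ∀ L : germSet S k, ∃ (L'' : Set (Fin N → ℤ)) (M : germSet S k),
    IsOrthantOfRank L'' k ∧ L'' ⊆ L.1 ∧ Commensurable L.1 L'' ∧
    M.1 = ⇑g '' L'' ∧ σ (germOf S k L) = germOf S k M

/-- A finitary permutation which is even (has sign `1` on a finite invariant subset). -/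
def IsEvenFinitary {α : Type*} (σ : Equiv.Perm α) : Prop :=
  ∃ (F : Finset α) (σF : Equiv.Perm F),
    (∀ a ∉ F, σ a = a) ∧ (∀ a : F, σ (a : α) = (σF a : α)) ∧
    @Equiv.Perm.sign F (Classical.decEq _) inferInstance σF = 1

/-- `g` induces an even finitary permutation on the rank-`k` germs of `S`. -/
def IsEvenOnGerms {N : ℕ} (S : Set (Fin N → ℤ)) (k : ℕ) (g : Equiv.Perm (Fin N → ℤ)) : Prop :=
  ∃ σ : Equiv.Perm (Germ S k), InducesGermMap S k g ⇑σ ∧ IsEvenFinitary σ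

/-- Ordering of germs (of arbitrary ranks): `p ≤ q` if they have representatives `L ⊆ L'`. -/
def germLE {N : ℕ} (S : Set (Fin N → ℤ)) (p q : Σ k, Germ S k) : Prop :=
  ∃ (L : germSet S p.1) (L' : germSet S q.1),
    germOf S p.1 L = p.2 ∧ germOf S q.1 L' = q.2 ∧ L.1 ⊆ L'.1

/-- A maximal germ of `S`. -/
def IsMaxGerm {N : ℕ} (S : Set (Fin N → ℤ)) (p : Σ k, Germ S k) : Prop :=
  ∀ q, germLE S p q → germLE S q p

/-- A `0`-based orthant. -/
def IsBasedOrthant {N : ℕ} (L0 : Set (Fin N → ℤ)) : Prop :=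
  ∃ (A : Matrix (Fin N) (Fin N) ℤ) (Y : Finset (Fin N)),
    IsOrthMat A ∧ L0 = (fun v => A.mulVec v) '' stdFace N Y

/-- Two (oriented) parallel orthants. -/
def ParallelOrthants {N : ℕ} (L L' : Set (Fin N → ℤ)) : Prop :=
  ∃ a : Fin N → ℤ, L' = a +ᵥ L

/-- The indicator image `S_τ` of `S`: the union of the `0`-based parallel translates of
the orthants contained in `S`. -/
def indicatorImage {N : ℕ} (S : Set (Fin N → ℤ)) : Set (Fin N → ℤ) :=
  ⋃₀ {L0 | IsBasedOrthant L0 ∧ ∃ a : Fin N → ℤ, (a +ᵥ L0) ⊆ S}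

/-- The height function `h_S`: the number of maximal germs of `S` whose indicator is `L0`. -/
noncomputable def hFun {N : ℕ} (S : Set (Fin N → ℤ)) (L0 : Set (Fin N → ℤ)) : ℕ :=
  Nat.card {p : Σ k, Germ S k //
    IsMaxGerm S p ∧ ∃ L : germSet S p.1, germOf S p.1 L = p.2 ∧ ∃ a : Fin N → ℤ, L.1 = a +ᵥ L0}

/-- `S` is quasi-normal: the maximal based orthants of `S_τ` are exactly the support of `h_S`. -/
def QuasiNormal {N : ℕ} (S : Set (Fin N → ℤ)) : Prop :=
  ∀ L0 : Set (Fin N → ℤ),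
    (IsBasedOrthant L0 ∧ L0 ⊆ indicatorImage S ∧
      ∀ L1, IsBasedOrthant L1 → L1 ⊆ indicatorImage S → L0 ⊆ L1 → L1 ⊆ L0)
    ↔ (IsBasedOrthant L0 ∧ 0 < hFun S L0)

/-- The germ `q` of `S'` is the image of the germ `p` of `S` under the injective pei-map `f`. -/
def GermMapsTo {N : ℕ} (f : (Fin N → ℤ) → (Fin N → ℤ)) (S S' : Set (Fin N → ℤ))
    (p : Σ k, Germ S k) (q : Σ k, Germ S' k) : Prop :=
  p.1 = q.1 ∧ ∃ (L : germSet S p.1) (L'' : Set (Fin N → ℤ)) (M : germSet S' q.1),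
    germOf S p.1 L = p.2 ∧ IsOrthantOfRank L'' p.1 ∧ L'' ⊆ L.1 ∧ Commensurable L.1 L'' ∧
    M.1 = f '' L'' ∧ germOf S' q.1 M = q.2

/-- A stack of `h` parallel rank-`n` orthants. -/
def IsStack {N : ℕ} (S : Set (Fin N → ℤ)) (n h : ℕ) : Prop :=
  ∃ (L0 : Set (Fin N → ℤ)) (a : Fin h → (Fin N → ℤ)),
    IsOrthantOfRank L0 n ∧
    (Pairwise fun i j => Disjoint (a i +ᵥ L0) (a j +ᵥ L0)) ∧
    S = ⋃ i, a i +ᵥ L0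

/-- A coordinate half-space of `ℤ^N`. -/
def IsHalfSpace {N : ℕ} (H : Set (Fin N → ℤ)) : Prop :=
  ∃ (i : Fin N) (c : ℤ), H = {x | x i ≤ c} ∨ H = {x | c ≤ x i}

/-- The canonical embedding `ℤ^N → ℤ^{N+1}`. -/
def emb (N : ℕ) (x : Fin N → ℤ) : Fin (N + 1) → ℤ :=
  fun i => if h : (i : ℕ) < N then x ⟨i, h⟩ else 0

/-- The sum of all matrix entries of a finitely supported family of vectors. -/
noncomputable def totalSum (k : ℕ) (Γ : Type*) : (Γ →₀ (Fin k → ℤ)) →+ ℤ :=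
  Finsupp.liftAddHom (fun _ => ∑ i : Fin k, Pi.evalAddMonoidHom (fun _ => ℤ) i)

/-- The clique (flag) complex of a graph. -/
def cliqueComplex {V : Type*} (G : SimpleGraph V) : Set (Finset V) :=
  {s | s.Nonempty ∧ G.IsClique (s : Set V)}

/-- The geometric realization of a simplicial complex on vertex set `V`. -/
def realization {V : Type*} (K : Set (Finset V)) : Set (V → ℝ) :=
  {f | (∀ v, 0 ≤ f v) ∧ ∃ s ∈ K, Function.support f ⊆ ↑s ∧ ∑ v ∈ s, f v = 1}

/-- A wedge (bouquet) of `n`-spheres indexed by `ι`, with basepoint `b`. -/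
noncomputable def wedgeSpheres (ι : Type) (n : ℕ)
    (b : Metric.sphere (0 : EuclideanSpace ℝ (Fin (n + 1))) 1) : Type :=
  Quot (fun p q : Unit ⊕ (ι × Metric.sphere (0 : EuclideanSpace ℝ (Fin (n + 1))) 1) =>
    (Sum.elim (fun _ => True) (fun pr => pr.2 = b) p) ∧
    (Sum.elim (fun _ => True) (fun qr => qr.2 = b) q))

noncomputable instance (ι : Type) (n : ℕ) (b : Metric.sphere (0 : EuclideanSpace ℝ (Fin (n + 1))) 1) :
    TopologicalSpace (wedgeSpheres ι n b) :=
  letI : TopologicalSpace ι := ⊥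
  instTopologicalSpaceQuot



/-! ### Auxiliary development: box calculus -/

section Aux

variable {N : ℕ}

/-- A factor of a box: a point, an upward ray or a downward ray in `ℤ`. -/
inductive BF : Type
  | pt (c : ℤ)
  | up (c : ℤ)
  | dn (c : ℤ)
deriving DecidableEq

namespace BF

def fSet : BF → Set ℤ
  | .pt c => {c}
  | .up c => Set.Ici c
  | .dn c => Set.Iic c

def isRay : BF → Bool
  | .pt _ => false
  | _ => true

def base : BF → ℤ
  | .pt c => c
  | .up c => c
  | .dn c => c

lemma base_mem (f : BF) : f.base ∈ f.fSet := by
  cases f <;> simp [fSet, base]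

end BF

/-- A box in `ℤ^N`. -/
abbrev Box (N : ℕ) := Fin N → BF

def bSet (b : Box N) : Set (Fin N → ℤ) := {x | ∀ i, x i ∈ (b i).fSet}

def rayset (b : Box N) : Finset (Fin N) := Finset.univ.filter (fun i => (b i).isRay = true)

def brank (b : Box N) : ℕ := (rayset b).card

lemma basePt_mem (b : Box N) : (fun i => (b i).base) ∈ bSet b := fun i => BF.base_mem _

lemma bSet_nonempty (b : Box N) : (bSet b).Nonempty := ⟨_, basePt_mem b⟩

lemma update_mem {b : Box N} {x : Fin N → ℤ} (hx : x ∈ bSet b) {i : Fin N} {v : ℤ}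
    (hv : v ∈ (b i).fSet) : Function.update x i v ∈ bSet b := by
  intro j
  rcases eq_or_ne j i with rfl | h
  · simpa using hv
  · simpa [Function.update_of_ne h] using hx j

lemma ray_two (f : BF) (h : f.isRay = true) : ∃ v ∈ f.fSet, v ≠ f.base := by
  cases f with
  | pt c => simp [BF.isRay] at h
  | up c => exact ⟨c + 1, by simp [BF.fSet], by simp only [BF.base]; omega⟩
  | dn c => exact ⟨c - 1, by simp [BF.fSet], by simp only [BF.base]; omega⟩

lemma not_isRay_eq_pt {f : BF} (h : ¬ f.isRay = true) : ∃ c, f = .pt c := by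
  cases f with
  | pt c => exact ⟨c, rfl⟩
  | up c => simp [BF.isRay] at h
  | dn c => simp [BF.isRay] at h

lemma isRay_of_subset {b' b : Box N} (h : bSet b' ⊆ bSet b) {i : Fin N}
    (hi : (b' i).isRay = true) : (b i).isRay = true := by
  by_contra hb
  obtain ⟨c, hc⟩ := not_isRay_eq_pt hb
  obtain ⟨v, hv, hne⟩ := ray_two _ hi
  have h1 := h (basePt_mem b') i
  have h2 := h (update_mem (basePt_mem b') hv) i
  rw [hc] at h1 h2
  simp only [BF.fSet, Set.mem_singleton_iff, Function.update_self] at h1 h2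
  exact hne (h2.trans h1.symm)

lemma rayset_subset {b' b : Box N} (h : bSet b' ⊆ bSet b) : rayset b' ⊆ rayset b := by
  intro i hi
  simp only [rayset, Finset.mem_filter, Finset.mem_univ, true_and] at hi ⊢
  exact isRay_of_subset h hi

lemma brank_le_of_subset {b' b : Box N} (h : bSet b' ⊆ bSet b) : brank b' ≤ brank b :=
  Finset.card_le_card (rayset_subset h)

/-! #### Integral orthogonal matrices are signed permutations -/

lemma introw (w : Fin N → ℤ) (h : ∑ j, w j * w j = 1) :
    ∃ j₀, (w j₀ = 1 ∨ w j₀ = -1) ∧ ∀ j, j ≠ j₀ → w j = 0 := by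
  have hex : ∃ j₀, w j₀ ≠ 0 := by
    by_contra hc
    push_neg at hc
    simp [hc] at h
  obtain ⟨j₀, hj₀⟩ := hex
  have h1 : 1 ≤ w j₀ * w j₀ := by
    rcases lt_or_gt_of_ne hj₀ with h' | h' <;> nlinarith
  have hle : w j₀ * w j₀ ≤ 1 := by
    have h2 : w j₀ * w j₀ ≤ ∑ j, w j * w j := by
      simpa using Finset.single_le_sum (f := fun j => w j * w j)
        (fun j _ => mul_self_nonneg (w j)) (Finset.mem_univ j₀)
    omega
  have heq : w j₀ * w j₀ = 1 := le_antisymm hle h1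
  have hrest : ∑ j ∈ Finset.univ.erase j₀, w j * w j = 0 := by
    have h3 : ∑ j ∈ Finset.univ.erase j₀, w j * w j + w j₀ * w j₀ = ∑ j, w j * w j := by
      simpa using Finset.sum_erase_add Finset.univ (fun j => w j * w j) (Finset.mem_univ j₀)
    omega
  refine ⟨j₀, mul_self_eq_one_iff.mp heq, fun j hj => ?_⟩
  have := (Finset.sum_eq_zero_iff_of_nonneg
    (fun j _ => mul_self_nonneg (w j))).mp hrest j (Finset.mem_erase.mpr ⟨hj, Finset.mem_univ j⟩)
  exact mul_self_eq_zero.mp this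

lemma orthMat_rows {A : Matrix (Fin N) (Fin N) ℤ} (hA : IsOrthMat A) (i i' : Fin N) :
    ∑ j, A i j * A i' j = if i = i' then (1 : ℤ) else 0 := by
  have h1 : (A * A.transpose) i i' = (1 : Matrix (Fin N) (Fin N) ℤ) i i' := by rw [hA]
  simpa [Matrix.mul_apply, Matrix.transpose_apply, Matrix.one_apply] using h1

/-- Every rank-`k` orthant is a box of rank `k`. -/
lemma orthant_eq_box {L : Set (Fin N → ℤ)} {k : ℕ} (h : IsOrthantOfRank L k) :
    ∃ b : Box N, brank b = k ∧ L = bSet b := by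
  classical
  obtain ⟨a, A, Y, hA, hY, rfl⟩ := h
  choose σ hσ using fun i => introw (A i) (by simpa using orthMat_rows hA i i)
  have hinj : Function.Injective σ := by
    intro i i' hii
    by_contra hne
    have h0 := orthMat_rows hA i i'
    rw [if_neg hne] at h0
    have hsum : ∑ j, A i j * A i' j = A i (σ i) * A i' (σ i) := by
      refine Finset.sum_eq_single (σ i) (fun j _ hj => ?_) (by simp)
      rw [(hσ i).2 j hj, zero_mul]
    rw [hsum] at h0
    have h1 := (hσ i).1
    have h2 := (hσ i').1
    rw [← hii] at h2
    rcases h1 with h1 | h1 <;> rcases h2 with h2 | h2 <;> rw [h1, h2] at h0 <;> omega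
  have hbij : Function.Bijective σ := Finite.injective_iff_bijective.mp hinj
  let e : Fin N ≃ Fin N := Equiv.ofBijective σ hbij
  have hτ : ∀ j, σ (e.symm j) = j := fun j => e.apply_symm_apply j
  have hτ2 : ∀ i, e.symm (σ i) = i := fun i => e.symm_apply_apply i
  have hmv : ∀ (v : Fin N → ℤ) i, A.mulVec v i = A i (σ i) * v (σ i) := by
    intro v i
    show ∑ j, A i j * v j = _
    refine Finset.sum_eq_single (σ i) (fun j _ hj => ?_) (by simp)
    rw [(hσ i).2 j hj, zero_mul]
  refine ⟨fun i => if σ i ∈ Y then (if A i (σ i) = 1 then .up (a i) else .dn (a i))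
      else .pt (a i), ?_, ?_⟩
  · have hfil : rayset (fun i => if σ i ∈ Y then
        (if A i (σ i) = 1 then BF.up (a i) else BF.dn (a i)) else BF.pt (a i))
        = Finset.univ.filter (fun i => σ i ∈ Y) := by
      ext i
      by_cases hi : σ i ∈ Y <;> by_cases h1 : A i (σ i) = 1 <;>
        (simp only [rayset, Finset.mem_filter, Finset.mem_univ, true_and]; simp [hi, h1, BF.isRay])
    rw [brank, hfil, ← hY]
    exact Finset.card_bij (fun i _ => σ i)
      (fun i hi => by simpa using (Finset.mem_filter.mp hi).2)
      (fun i hi i' hi' h => hinj h)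
      (fun y hy => ⟨e.symm y, by simp [hτ, hy], hτ y⟩)
  · ext x
    constructor
    · rintro ⟨v, ⟨hv0, hvY⟩, rfl⟩ i
      have hvnn := hv0 (σ i)
      beta_reduce
      by_cases hi : σ i ∈ Y
      · rcases (hσ i).1 with h1 | h1
        · rw [if_pos hi, if_pos h1]
          simp only [BF.fSet, Set.mem_Ici, Pi.add_apply, hmv, h1]
          omega
        · rw [if_pos hi, if_neg (by rw [h1]; norm_num)]
          simp only [BF.fSet, Set.mem_Iic, Pi.add_apply, hmv, h1]
          omega
      · rw [if_neg hi]
        simp only [BF.fSet, Set.mem_singleton_iff, Pi.add_apply, hmv, hvY (σ i) hi]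
        ring
    · intro hx
      refine ⟨fun j => if j ∈ Y then A (e.symm j) j * (x (e.symm j) - a (e.symm j)) else 0,
        ⟨?_, fun j hj => by simp [hj]⟩, ?_⟩
      · intro j
        beta_reduce
        by_cases hj : j ∈ Y
        · rw [if_pos hj]
          have hxi := hx (e.symm j)
          simp only [hτ, if_pos hj] at hxi
          have h1 := (hσ (e.symm j)).1
          rw [hτ j] at h1
          rcases h1 with h1 | h1
          · rw [if_pos h1] at hxi
            simp only [BF.fSet, Set.mem_Ici] at hxi
            rw [h1]
            nlinarith
          · rw [if_neg (by rw [h1]; norm_num)] at hxi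
            simp only [BF.fSet, Set.mem_Iic] at hxi
            rw [h1]
            nlinarith
        · simp [hj]
      · funext i
        simp only [Pi.add_apply, hmv]
        beta_reduce
        by_cases hi : σ i ∈ Y
        · rw [if_pos hi]
          simp only [hτ2]
          have h1 := (hσ i).1
          rcases h1 with h1 | h1 <;> rw [h1] <;> ring
        · rw [if_neg hi, mul_zero]
          have hxi := hx i
          simp only [if_neg hi, BF.fSet, Set.mem_singleton_iff] at hxi
          omega

def BF.sgn : BF → ℤ
  | .dn _ => -1
  | _ => 1

/-- Every box of rank `k` is a rank-`k` orthant. -/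
lemma box_is_orthant (b : Box N) : IsOrthantOfRank (bSet b) (brank b) := by
  classical
  refine ⟨fun i => (b i).base, Matrix.diagonal (fun i => (b i).sgn), rayset b, ?_, rfl, ?_⟩
  · show _ * _ = _
    rw [Matrix.diagonal_transpose, Matrix.diagonal_mul_diagonal]
    have : ∀ i, (b i).sgn * (b i).sgn = 1 := by
      intro i; cases b i <;> simp [BF.sgn]
    simp only [this]
    rfl
  · have hmv : ∀ (v : Fin N → ℤ) i,
        (Matrix.diagonal (fun i => (b i).sgn)).mulVec v i = (b i).sgn * v i := by
      intro v i
      show ∑ j, Matrix.diagonal (fun i => (b i).sgn) i j * v j = _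
      rw [Finset.sum_eq_single i (fun j _ hj => by
        rw [Matrix.diagonal_apply_ne _ (Ne.symm hj), zero_mul])
        (fun h => absurd (Finset.mem_univ i) h)]
      rw [Matrix.diagonal_apply_eq]
    ext x
    constructor
    · intro hx
      refine ⟨fun i => (b i).sgn * (x i - (b i).base), ⟨?_, ?_⟩, ?_⟩
      · intro i
        have hxi := hx i
        cases hbi : b i with
        | pt c =>
          rw [hbi] at hxi
          simp only [BF.fSet, Set.mem_singleton_iff] at hxi
          simp [BF.sgn, BF.base, hbi, hxi]
        | up c =>
          rw [hbi] at hxi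
          simp only [BF.fSet, Set.mem_Ici] at hxi
          simp only [BF.sgn, BF.base, hbi]
          omega
        | dn c =>
          rw [hbi] at hxi
          simp only [BF.fSet, Set.mem_Iic] at hxi
          simp only [BF.sgn, BF.base, hbi]
          omega
      · intro i hi
        simp only [rayset, Finset.mem_filter, Finset.mem_univ, true_and] at hi
        obtain ⟨c, hc⟩ := not_isRay_eq_pt hi
        have := hx i
        rw [hc] at this
        simp only [BF.fSet, Set.mem_singleton_iff] at this
        simp [hc, this, BF.base]
      · funext i
        simp only [Pi.add_apply, hmv]
        have : (b i).sgn * ((b i).sgn * (x i - (b i).base)) = x i - (b i).base := by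
          cases b i <;> simp [BF.sgn] <;> ring
        rw [this]; ring
    · rintro ⟨v, ⟨hv0, hvY⟩, rfl⟩ i
      simp only [Pi.add_apply, hmv]
      cases hbi : b i with
      | pt c =>
        have : i ∉ rayset b := by simp only [rayset, Finset.mem_filter, Finset.mem_univ, true_and, hbi]; simp [BF.isRay]
        rw [hvY i this]
        simp [BF.fSet, BF.base, hbi, BF.sgn]
      | up c =>
        have := hv0 i
        simp only [BF.fSet, Set.mem_Ici, BF.base, hbi, BF.sgn]
        omega
      | dn c =>
        have := hv0 i
        simp only [BF.fSet, Set.mem_Iic, BF.base, hbi, BF.sgn]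
        omega

lemma orthant_iff_box {L : Set (Fin N → ℤ)} {k : ℕ} :
    IsOrthantOfRank L k ↔ ∃ b : Box N, brank b = k ∧ L = bSet b := by
  constructor
  · exact orthant_eq_box
  · rintro ⟨b, rfl, rfl⟩
    exact box_is_orthant b

lemma orthant_nonempty {L : Set (Fin N → ℤ)} {k : ℕ} (h : IsOrthantOfRank L k) : L.Nonempty := by
  obtain ⟨b, -, rfl⟩ := orthant_eq_box h
  exact bSet_nonempty b

lemma orthant_rank_le {L L' : Set (Fin N → ℤ)} {j k : ℕ}
    (hL : IsOrthantOfRank L j) (hL' : IsOrthantOfRank L' k) (h : L ⊆ L') : j ≤ k := by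
  obtain ⟨b, rfl, rfl⟩ := orthant_eq_box hL
  obtain ⟨b', rfl, rfl⟩ := orthant_eq_box hL'
  exact brank_le_of_subset h

end Aux


section Rank

variable {N : ℕ}

def rset (X : Set (Fin N → ℤ)) : Set ℕ := {k | ∃ L, IsOrthantOfRank L k ∧ L ⊆ X}

lemma orthRank_def (X : Set (Fin N → ℤ)) : orthRank X = sSup (rset X) := rfl

lemma rset_bddAbove (X : Set (Fin N → ℤ)) : BddAbove (rset X) := by
  refine ⟨N, fun k hk => ?_⟩
  obtain ⟨L, ⟨a, A, Y, _, hY, _⟩, _⟩ := hk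
  rw [← hY]
  simpa using Finset.card_le_univ Y

lemma le_orthRank {X : Set (Fin N → ℤ)} {k : ℕ} (h : k ∈ rset X) : k ≤ orthRank X :=
  le_csSup (rset_bddAbove X) h

lemma orthRank_le {X : Set (Fin N → ℤ)} {m : ℕ} (h : ∀ j ∈ rset X, j ≤ m) : orthRank X ≤ m :=
  csSup_le' h

lemma orthRank_mono {X Y : Set (Fin N → ℤ)} (h : X ⊆ Y) : orthRank X ≤ orthRank Y :=
  orthRank_le fun j ⟨L, hL, hs⟩ => le_orthRank ⟨L, hL, hs.trans h⟩

lemma orthRank_orthant {L : Set (Fin N → ℤ)} {k : ℕ} (h : IsOrthantOfRank L k) :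
    orthRank L = k :=
  le_antisymm (orthRank_le fun _ ⟨L', hL', hs⟩ => orthant_rank_le hL' h hs)
    (le_orthRank ⟨L, h, subset_rfl⟩)

lemma singleton_orthant (x : Fin N → ℤ) : IsOrthantOfRank {x} 0 := by
  rw [orthant_iff_box]
  refine ⟨fun i => .pt (x i), ?_, ?_⟩
  · simp [brank, rayset, BF.isRay]
  · ext y
    simp only [Set.mem_singleton_iff, bSet, Set.mem_setOf_eq, BF.fSet]
    constructor
    · rintro rfl i; rfl
    · intro h; funext i; exact h i

lemma orthRank_attained {X : Set (Fin N → ℤ)} (hne : X.Nonempty) :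
    ∃ L, IsOrthantOfRank L (orthRank X) ∧ L ⊆ X := by
  obtain ⟨x, hx⟩ := hne
  have h0 : 0 ∈ rset X := ⟨{x}, singleton_orthant x, by simpa using hx⟩
  exact Nat.sSup_mem ⟨0, h0⟩ (rset_bddAbove X)

lemma comm_of_sub {L L' : Set (Fin N → ℤ)} {r : ℕ} (hL : IsOrthantOfRank L r)
    (hL' : IsOrthantOfRank L' r) (hs : L' ⊆ L) : Commensurable L L' := by
  have h1 : L ∩ L' = L' := Set.inter_eq_self_of_subset_right hs
  refine ⟨?_, ?_, ?_⟩
  · rw [h1]; exact orthant_nonempty hL'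
  · rw [h1, orthRank_orthant hL, orthRank_orthant hL']
  · rw [h1]

lemma comm_attain {L M : Set (Fin N → ℤ)} {r : ℕ} (hL : IsOrthantOfRank L r)
    (hcomm : Commensurable L M) : ∃ Z, IsOrthantOfRank Z r ∧ Z ⊆ L ∩ M := by
  have h1 : orthRank (L ∩ M) = r := by
    rw [← hcomm.2.1, orthRank_orthant hL]
  obtain ⟨Z, hZ, hZs⟩ := orthRank_attained hcomm.1
  exact ⟨Z, h1 ▸ hZ, hZs⟩

end Rank


section Algebra

variable {N : ℕ}

/-- Elementary subsets of `ℤ`: finite unions of factors. -/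
def Elem (D : Set ℤ) : Prop := ∃ T : Set BF, T.Finite ∧ D = ⋃ f ∈ T, f.fSet

lemma elem_fSet (f : BF) : Elem f.fSet := ⟨{f}, Set.finite_singleton _, by simp⟩

lemma elem_empty : Elem (∅ : Set ℤ) := ⟨∅, Set.finite_empty, by simp⟩

lemma elem_univ : Elem (Set.univ : Set ℤ) := by
  refine ⟨{BF.up 0, BF.dn 0}, (Set.finite_singleton _).insert _, ?_⟩
  ext x
  simp only [Set.mem_univ, true_iff, Set.mem_iUnion]
  by_cases h : 0 ≤ x
  · exact ⟨BF.up 0, by simp [BF.fSet, h]⟩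
  · exact ⟨BF.dn 0, by simp [BF.fSet]; omega⟩

lemma elem_union {D E : Set ℤ} (hD : Elem D) (hE : Elem E) : Elem (D ∪ E) := by
  obtain ⟨T, hT, rfl⟩ := hD
  obtain ⟨T', hT', rfl⟩ := hE
  exact ⟨T ∪ T', hT.union hT', by rw [Set.biUnion_union]⟩

lemma elem_biUnion {ι : Type*} {s : Set ι} (hs : s.Finite) {D : ι → Set ℤ}
    (h : ∀ i ∈ s, Elem (D i)) : Elem (⋃ i ∈ s, D i) := by
  revert h
  refine Set.Finite.induction_on _ hs (fun _ => by simpa using elem_empty) ?_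
  intro a t ha ht ih h
  rw [Set.biUnion_insert]
  exact elem_union (h _ (Set.mem_insert _ _))
    (ih fun i hi => h i (Set.mem_insert_of_mem _ hi))

lemma elem_of_finite {D : Set ℤ} (h : D.Finite) : Elem D := by
  refine ⟨BF.pt '' D, h.image _, ?_⟩
  ext x
  simp [BF.fSet, eq_comm]

lemma elem_inter_ff (f g : BF) : Elem (f.fSet ∩ g.fSet) := by
  have hpt : ∀ (c : ℤ) (E : Set ℤ), Elem ((BF.pt c).fSet ∩ E) := by
    intro c E
    exact elem_of_finite ((Set.finite_singleton c).inter_of_left E)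
  cases f with
  | pt c => exact hpt c _
  | up c =>
    cases g with
    | pt d => rw [Set.inter_comm]; exact hpt d _
    | up d => rw [show (BF.up c).fSet ∩ (BF.up d).fSet = (BF.up (max c d)).fSet by
        simp [BF.fSet, Set.Ici_inter_Ici]]; exact elem_fSet _
    | dn d =>
      refine elem_of_finite ?_
      rw [show (BF.up c).fSet ∩ (BF.dn d).fSet = Set.Icc c d by simp [BF.fSet, Set.Ici_inter_Iic]]
      exact Set.finite_Icc c d
  | dn c =>
    cases g with
    | pt d => rw [Set.inter_comm]; exact hpt d _
    | up d =>
      refine elem_of_finite ?_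
      rw [show (BF.dn c).fSet ∩ (BF.up d).fSet = Set.Icc d c by
        rw [Set.inter_comm]; simp [BF.fSet, Set.Ici_inter_Iic]]
      exact Set.finite_Icc d c
    | dn d => rw [show (BF.dn c).fSet ∩ (BF.dn d).fSet = (BF.dn (min c d)).fSet by
        simp [BF.fSet, Set.Iic_inter_Iic]]; exact elem_fSet _

lemma elem_inter {D E : Set ℤ} (hD : Elem D) (hE : Elem E) : Elem (D ∩ E) := by
  obtain ⟨T, hT, rfl⟩ := hD
  obtain ⟨T', hT', rfl⟩ := hE
  rw [Set.iUnion₂_inter]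
  refine elem_biUnion hT fun f hf => ?_
  rw [Set.inter_iUnion₂]
  exact elem_biUnion hT' fun g hg => elem_inter_ff f g

lemma elem_compl_f (f : BF) : Elem (f.fSet)ᶜ := by
  cases f with
  | pt c =>
    refine ⟨{BF.dn (c - 1), BF.up (c + 1)}, (Set.finite_singleton _).insert _, ?_⟩
    ext x
    simp only [Set.mem_compl_iff, BF.fSet, Set.mem_singleton_iff, Set.mem_iUnion]
    constructor
    · intro h
      rcases lt_or_gt_of_ne h with h' | h'
      · exact ⟨BF.dn (c - 1), by simp [BF.fSet]; omega⟩
      · exact ⟨BF.up (c + 1), by simp [BF.fSet]; omega⟩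
    · rintro ⟨g, hg, hx⟩
      rcases hg with rfl | hg
      · simp only [BF.fSet, Set.mem_Iic] at hx; omega
      · simp only [Set.mem_singleton_iff] at hg
        subst hg
        simp only [BF.fSet, Set.mem_Ici] at hx; omega
  | up c =>
    refine ⟨{BF.dn (c - 1)}, Set.finite_singleton _, ?_⟩
    ext x
    simp only [Set.mem_compl_iff, BF.fSet, Set.mem_Ici, Set.mem_iUnion, Set.mem_singleton_iff]
    constructor
    · intro h; exact ⟨BF.dn (c-1), rfl, by simp [BF.fSet]; omega⟩
    · rintro ⟨g, rfl, hx⟩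
      simp only [BF.fSet, Set.mem_Iic] at hx; omega
  | dn c =>
    refine ⟨{BF.up (c + 1)}, Set.finite_singleton _, ?_⟩
    ext x
    simp only [Set.mem_compl_iff, BF.fSet, Set.mem_Iic, Set.mem_iUnion, Set.mem_singleton_iff]
    constructor
    · intro h; exact ⟨BF.up (c+1), rfl, by simp [BF.fSet]; omega⟩
    · rintro ⟨g, rfl, hx⟩
      simp only [BF.fSet, Set.mem_Ici] at hx; omega

/-- Finite unions of boxes (equivalent to `IsOrthohedral`). -/
def OB (X : Set (Fin N → ℤ)) : Prop :=
  ∃ T : Set (Box N), T.Finite ∧ X = ⋃ b ∈ T, bSet b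

lemma ob_of_box (b : Box N) : OB (bSet b) := ⟨{b}, Set.finite_singleton _, by simp⟩

lemma ob_empty : OB (∅ : Set (Fin N → ℤ)) := ⟨∅, Set.finite_empty, by simp⟩

lemma ob_union {X Y : Set (Fin N → ℤ)} (hX : OB X) (hY : OB Y) : OB (X ∪ Y) := by
  obtain ⟨T, hT, rfl⟩ := hX
  obtain ⟨T', hT', rfl⟩ := hY
  exact ⟨T ∪ T', hT.union hT', by rw [Set.biUnion_union]⟩

lemma ob_biUnion {ι : Type*} {s : Set ι} (hs : s.Finite) {D : ι → Set (Fin N → ℤ)}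
    (h : ∀ i ∈ s, OB (D i)) : OB (⋃ i ∈ s, D i) := by
  revert h
  refine Set.Finite.induction_on _ hs (fun _ => by simpa using ob_empty) ?_
  intro a t ha ht ih h
  rw [Set.biUnion_insert]
  exact ob_union (h _ (Set.mem_insert _ _))
    (ih fun i hi => h i (Set.mem_insert_of_mem _ hi))

lemma bSet_eq_pi (b : Box N) : bSet b = Set.pi Set.univ (fun i => (b i).fSet) := by
  ext x; simp [bSet, Set.mem_pi]

lemma ob_pi {D : Fin N → Set ℤ} (h : ∀ i, Elem (D i)) : OB (Set.pi Set.univ D) := by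
  classical
  choose T hTf hTeq using h
  refine ⟨Set.univ.pi T, Set.Finite.pi hTf, ?_⟩
  ext x
  simp only [Set.mem_pi, Set.mem_univ, true_implies, Set.mem_iUnion]
  constructor
  · intro hx
    have : ∀ i, ∃ f ∈ T i, x i ∈ f.fSet := by
      intro i
      have := hx i
      rw [hTeq i] at this
      simpa using this
    choose g hg1 hg2 using this
    exact ⟨g, fun i => hg1 i, fun i => hg2 i⟩

  · rintro ⟨g, hg1, hg2⟩ i
    rw [hTeq i]
    exact Set.mem_biUnion (hg1 i) (hg2 i)

lemma ob_inter_box (b b' : Box N) : OB (bSet b ∩ bSet b') := by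
  have h : bSet b ∩ bSet b' = Set.pi Set.univ (fun i => (b i).fSet ∩ (b' i).fSet) := by
    rw [bSet_eq_pi, bSet_eq_pi, ← Set.pi_inter_distrib]
  rw [h]
  exact ob_pi fun i => elem_inter_ff _ _

lemma ob_diff_box_box (b b' : Box N) : OB (bSet b \ bSet b') := by
  classical
  have h : bSet b \ bSet b' =
      ⋃ i ∈ (Set.univ : Set (Fin N)),
        Set.pi Set.univ (fun j => (b j).fSet ∩ (if j = i then ((b' j).fSet)ᶜ else Set.univ)) := by
    ext x
    simp only [Set.mem_diff, bSet, Set.mem_setOf_eq, Set.mem_iUnion, Set.mem_pi, Set.mem_univ,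
      true_implies, Set.mem_inter_iff, exists_and_left, exists_prop, true_and]
    constructor
    · rintro ⟨hb, hb'⟩
      push_neg at hb'
      obtain ⟨i, hi⟩ := hb'
      refine ⟨i, fun j => ⟨hb j, ?_⟩⟩
      by_cases hj : j = i
      · subst hj; simp [hi]
      · simp [hj]
    · rintro ⟨i, hi⟩
      refine ⟨fun j => (hi j).1, fun hall => ?_⟩
      have := (hi i).2
      simp only [if_pos rfl, Set.mem_compl_iff] at this
      exact this (hall i)
  rw [h]
  refine ob_biUnion Set.finite_univ fun i _ => ob_pi fun j => ?_
  by_cases hj : j = i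
  · subst hj
    simp only [if_pos rfl]
    exact elem_inter (elem_fSet _) (elem_compl_f _)
  · simp only [if_neg hj]
    exact elem_inter (elem_fSet _) elem_univ

lemma ob_inter {X Y : Set (Fin N → ℤ)} (hX : OB X) (hY : OB Y) : OB (X ∩ Y) := by
  obtain ⟨T, hT, rfl⟩ := hX
  obtain ⟨T', hT', rfl⟩ := hY
  rw [Set.iUnion₂_inter]
  refine ob_biUnion hT fun b hb => ?_
  rw [Set.inter_iUnion₂]
  exact ob_biUnion hT' fun b' hb' => ob_inter_box b b'

lemma ob_diff_box {X : Set (Fin N → ℤ)} (hX : OB X) (b : Box N) : OB (X \ bSet b) := by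
  obtain ⟨T, hT, rfl⟩ := hX
  have h : (⋃ b' ∈ T, bSet b') \ bSet b = ⋃ b' ∈ T, (bSet b' \ bSet b) := by
    ext x
    simp only [Set.mem_diff, Set.mem_iUnion, exists_prop]
    tauto
  rw [h]
  exact ob_biUnion hT fun b' hb' => ob_diff_box_box b' b

lemma ob_diff_aux {T : Set (Box N)} (hT : T.Finite) :
    ∀ X : Set (Fin N → ℤ), OB X → OB (X \ ⋃ b ∈ T, bSet b) := by
  refine Set.Finite.induction_on _ hT (fun X hX => by simpa using hX) ?_
  intro b T' hb hT' ih X hX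
  have h : X \ ⋃ c ∈ insert b T', bSet c = (X \ bSet b) \ ⋃ c ∈ T', bSet c := by
    rw [Set.biUnion_insert]
    ext x
    simp only [Set.mem_diff, Set.mem_union]
    tauto
  rw [h]
  exact ih _ (ob_diff_box hX b)

lemma ob_diff {X Y : Set (Fin N → ℤ)} (hX : OB X) (hY : OB Y) : OB (X \ Y) := by
  obtain ⟨T, hT, rfl⟩ := hY
  exact ob_diff_aux hT X hX

lemma ob_iff_orthohedral {X : Set (Fin N → ℤ)} : OB X ↔ IsOrthohedral X := by
  constructor
  · rintro ⟨T, hT, rfl⟩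
    refine ⟨bSet '' T, hT.image _, ?_, ?_⟩
    · rintro L ⟨b, hb, rfl⟩
      exact ⟨brank b, box_is_orthant b⟩
    · rw [Set.sUnion_image]
  · rintro ⟨𝓛, h𝓛, horth, rfl⟩
    have : ∀ L ∈ 𝓛, OB L := by
      intro L hL
      obtain ⟨k, hk⟩ := horth L hL
      obtain ⟨b, -, rfl⟩ := orthant_eq_box hk
      exact ob_of_box b
    rw [Set.sUnion_eq_biUnion]
    exact ob_biUnion h𝓛 this

lemma ob_of_orthant {L : Set (Fin N → ℤ)} (h : IsOrthant L) : OB L := by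
  obtain ⟨k, hk⟩ := h
  obtain ⟨b, -, rfl⟩ := orthant_eq_box hk
  exact ob_of_box b

end Algebra


section Cover

variable {N : ℕ}

def BF.diag (f : BF) (M : ℤ) : ℤ :=
  match f with
  | .pt c => c
  | .up c => c + M
  | .dn c => c - M

lemma BF.diag_mem (f : BF) {M : ℤ} (hM : 0 ≤ M) : f.diag M ∈ f.fSet := by
  cases f <;> simp [BF.diag, BF.fSet] <;> omega

lemma mem_rayset {b : Box N} {i : Fin N} : i ∈ rayset b ↔ (b i).isRay = true := by
  simp [rayset]

/-- The key covering lemma: if a box is covered by finitely many sub-boxes, one of them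
has full rank. -/
lemma box_cover {b : Box N} {T : Set (Box N)} (hT : T.Finite)
    (hsub : ∀ c ∈ T, bSet c ⊆ bSet b) (hcov : bSet b ⊆ ⋃ c ∈ T, bSet c) :
    ∃ c ∈ T, brank c = brank b := by
  classical
  by_contra hno
  push_neg at hno
  have single : ∀ c ∈ T, ∃ M₀ : ℤ, 0 ≤ M₀ ∧ ∀ M, M₀ ≤ M →
      (fun i => (b i).diag M) ∉ bSet c := by
    intro c hc
    have hray := rayset_subset (hsub c hc)
    have hlt : (rayset c).card < (rayset b).card :=
      lt_of_le_of_ne (Finset.card_le_card hray) (hno c hc)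
    obtain ⟨i, hib, hic⟩ := Finset.not_subset.mp
      (fun hsub' => absurd (Finset.card_le_card hsub') (not_le.mpr hlt))
    have hbray : (b i).isRay = true := mem_rayset.mp hib
    have hcray : ¬ (c i).isRay = true := fun h => hic (mem_rayset.mpr h)
    obtain ⟨d, hd⟩ := not_isRay_eq_pt hcray
    cases hbi : b i with
    | pt e => rw [hbi] at hbray; simp [BF.isRay] at hbray
    | up e =>
      refine ⟨max 0 (d - e + 1), le_max_left _ _, fun M hM hmem => ?_⟩
      have h1 := hmem i
      simp only [hd, BF.fSet, Set.mem_singleton_iff] at h1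
      rw [hbi] at h1
      simp only [BF.diag] at h1
      have := le_trans (le_max_right 0 (d - e + 1)) hM
      omega
    | dn e =>
      refine ⟨max 0 (e - d + 1), le_max_left _ _, fun M hM hmem => ?_⟩
      have h1 := hmem i
      simp only [hd, BF.fSet, Set.mem_singleton_iff] at h1
      rw [hbi] at h1
      simp only [BF.diag] at h1
      have := le_trans (le_max_right 0 (e - d + 1)) hM
      omega
  have esc : ∀ T' : Set (Box N), T'.Finite → T' ⊆ T →
      ∃ M₀ : ℤ, 0 ≤ M₀ ∧ ∀ M, M₀ ≤ M → ∀ c ∈ T', (fun i => (b i).diag M) ∉ bSet c := by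
    intro T' hT'
    refine Set.Finite.induction_on _ hT' ?_ ?_
    · exact fun _ => ⟨0, le_refl 0, fun M _ c hc => absurd hc (Set.notMem_empty c)⟩
    · intro c T'' hc hT'' ih hsub'
      obtain ⟨M₀, hM₀, hM₀p⟩ := ih ((Set.subset_insert _ _).trans hsub')
      obtain ⟨M₁, hM₁, hM₁p⟩ := single c (hsub' (Set.mem_insert _ _))
      refine ⟨max M₀ M₁, le_trans hM₀ (le_max_left _ _), fun M hM c' hc' => ?_⟩
      rcases hc' with rfl | hc'
      · exact hM₁p M (le_trans (le_max_right _ _) hM)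
      · exact hM₀p M (le_trans (le_max_left _ _) hM) c' hc'
  obtain ⟨M₀, hM₀, hesc⟩ := esc T hT subset_rfl
  have hx : (fun i => (b i).diag M₀) ∈ bSet b := fun i => BF.diag_mem _ hM₀
  obtain ⟨c, hc, hxc⟩ := Set.mem_iUnion₂.mp (hcov hx)
  exact hesc M₀ le_rfl c hc hxc

def BF.meet (f g₁ g₂ : BF) : BF :=
  match f with
  | .pt _ => f
  | .up _ => .up (max g₁.base g₂.base)
  | .dn _ => .dn (min g₁.base g₂.base)

lemma box_meet {b b₁ b₂ : Box N} (h1 : bSet b₁ ⊆ bSet b) (h2 : bSet b₂ ⊆ bSet b)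
    (hr1 : brank b₁ = brank b) (hr2 : brank b₂ = brank b) :
    ∃ b₃ : Box N, brank b₃ = brank b ∧ bSet b₃ ⊆ bSet b₁ ∩ bSet b₂ := by
  have hray1 : rayset b₁ = rayset b :=
    Finset.eq_of_subset_of_card_le (rayset_subset h1) (le_of_eq hr1.symm)
  have hray2 : rayset b₂ = rayset b :=
    Finset.eq_of_subset_of_card_le (rayset_subset h2) (le_of_eq hr2.symm)
  -- structure of sub-boxes at point coordinates
  have hpt : ∀ (b' : Box N), bSet b' ⊆ bSet b → rayset b' = rayset b →
      ∀ i c, b i = .pt c → b' i = .pt c := by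
    intro b' hsub hray i c hbi
    have hi : i ∉ rayset b := by
      rw [mem_rayset, hbi]; simp [BF.isRay]
    rw [← hray, mem_rayset] at hi
    obtain ⟨d, hd⟩ := not_isRay_eq_pt hi
    have hbase := hsub (basePt_mem b') i
    rw [hbi] at hbase
    simp only [BF.fSet, Set.mem_singleton_iff] at hbase
    rw [hd] at hbase ⊢
    simp only [BF.base] at hbase
    rw [hbase]
  -- structure at upward ray coordinates
  have hup : ∀ (b' : Box N), bSet b' ⊆ bSet b → rayset b' = rayset b →
      ∀ i c, b i = .up c → ∃ d, b' i = .up d ∧ c ≤ d := by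
    intro b' hsub hray i c hbi
    have hi : i ∈ rayset b := by rw [mem_rayset, hbi]; rfl
    rw [← hray, mem_rayset] at hi
    have hbase := hsub (basePt_mem b') i
    rw [hbi] at hbase
    simp only [BF.fSet, Set.mem_Ici] at hbase
    cases hbi' : b' i with
    | pt d => rw [hbi'] at hi; simp [BF.isRay] at hi
    | up d =>
      rw [hbi'] at hbase
      simp only [BF.base] at hbase
      exact ⟨d, rfl, hbase⟩
    | dn d =>
      exfalso
      have hmem : Function.update (fun j => (b' j).base) i (min d c - 1) ∈ bSet b' := by
        refine update_mem (basePt_mem b') ?_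
        rw [hbi']
        simp only [BF.fSet, Set.mem_Iic]
        omega
      have := hsub hmem i
      rw [hbi] at this
      simp only [BF.fSet, Set.mem_Ici, Function.update_self] at this
      omega
  have hdn : ∀ (b' : Box N), bSet b' ⊆ bSet b → rayset b' = rayset b →
      ∀ i c, b i = .dn c → ∃ d, b' i = .dn d ∧ d ≤ c := by
    intro b' hsub hray i c hbi
    have hi : i ∈ rayset b := by rw [mem_rayset, hbi]; rfl
    rw [← hray, mem_rayset] at hi
    have hbase := hsub (basePt_mem b') i
    rw [hbi] at hbase
    simp only [BF.fSet, Set.mem_Iic] at hbase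
    cases hbi' : b' i with
    | pt d => rw [hbi'] at hi; simp [BF.isRay] at hi
    | dn d =>
      rw [hbi'] at hbase
      simp only [BF.base] at hbase
      exact ⟨d, rfl, hbase⟩
    | up d =>
      exfalso
      have hmem : Function.update (fun j => (b' j).base) i (max d c + 1) ∈ bSet b' := by
        refine update_mem (basePt_mem b') ?_
        rw [hbi']
        simp only [BF.fSet, Set.mem_Ici]
        omega
      have := hsub hmem i
      rw [hbi] at this
      simp only [BF.fSet, Set.mem_Iic, Function.update_self] at this
      omega
  refine ⟨fun i => (b i).meet (b₁ i) (b₂ i), ?_, ?_⟩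
  · have : rayset (fun i => (b i).meet (b₁ i) (b₂ i)) = rayset b := by
      ext i
      rw [mem_rayset, mem_rayset]
      cases hbi : b i <;> simp [BF.meet, BF.isRay]
    rw [brank, this, brank]
  · intro x hx
    constructor
    · intro i
      have hxi := hx i
      change x i ∈ ((b i).meet (b₁ i) (b₂ i)).fSet at hxi
      cases hbi : b i with
      | pt c =>
        rw [hpt b₁ h1 hray1 i c hbi]
        rw [hbi] at hxi
        simpa [BF.meet, hpt b₁ h1 hray1 i c hbi, hbi] using hxi
      | up c =>
        obtain ⟨d, hd, hcd⟩ := hup b₁ h1 hray1 i c hbi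
        rw [hd]
        rw [hbi] at hxi
        simp only [BF.meet, BF.fSet, Set.mem_Ici] at hxi ⊢
        have : d = (b₁ i).base := by rw [hd]; rfl
        rw [this]
        exact le_trans (le_max_left _ _) hxi
      | dn c =>
        obtain ⟨d, hd, hcd⟩ := hdn b₁ h1 hray1 i c hbi
        rw [hd]
        rw [hbi] at hxi
        simp only [BF.meet, BF.fSet, Set.mem_Iic] at hxi ⊢
        have : d = (b₁ i).base := by rw [hd]; rfl
        rw [this]
        exact le_trans hxi (min_le_left _ _)
    · intro i
      have hxi := hx i
      change x i ∈ ((b i).meet (b₁ i) (b₂ i)).fSet at hxi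
      cases hbi : b i with
      | pt c =>
        rw [hpt b₂ h2 hray2 i c hbi]
        rw [hbi] at hxi
        simpa [BF.meet, hpt b₁ h1 hray1 i c hbi, hbi] using hxi
      | up c =>
        obtain ⟨d, hd, hcd⟩ := hup b₂ h2 hray2 i c hbi
        rw [hd]
        rw [hbi] at hxi
        simp only [BF.meet, BF.fSet, Set.mem_Ici] at hxi ⊢
        have : d = (b₂ i).base := by rw [hd]; rfl
        rw [this]
        exact le_trans (le_max_right _ _) hxi
      | dn c =>
        obtain ⟨d, hd, hcd⟩ := hdn b₂ h2 hray2 i c hbi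
        rw [hd]
        rw [hbi] at hxi
        simp only [BF.meet, BF.fSet, Set.mem_Iic] at hxi ⊢
        have : d = (b₂ i).base := by rw [hd]; rfl
        rw [this]
        exact le_trans hxi (min_le_right _ _)

lemma orthant_meet {L L₁ L₂ : Set (Fin N → ℤ)} {r : ℕ} (hL : IsOrthantOfRank L r)
    (h₁ : IsOrthantOfRank L₁ r) (h₂ : IsOrthantOfRank L₂ r)
    (s₁ : L₁ ⊆ L) (s₂ : L₂ ⊆ L) : ∃ Z, IsOrthantOfRank Z r ∧ Z ⊆ L₁ ∩ L₂ := by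
  obtain ⟨b, hbr, rfl⟩ := orthant_eq_box hL
  obtain ⟨b₁, hbr₁, rfl⟩ := orthant_eq_box h₁
  obtain ⟨b₂, hbr₂, rfl⟩ := orthant_eq_box h₂
  obtain ⟨b₃, hr₃, hs₃⟩ := box_meet s₁ s₂ (hbr₁.trans hbr.symm) (hbr₂.trans hbr.symm)
  refine ⟨bSet b₃, ?_, hs₃⟩
  have := box_is_orthant b₃
  rwa [hr₃, hbr] at this

lemma orthant_cover {L : Set (Fin N → ℤ)} {r : ℕ} (hL : IsOrthantOfRank L r)
    {𝓨 : Set (Set (Fin N → ℤ))} (h𝓨 : 𝓨.Finite) (hOB : ∀ Y ∈ 𝓨, OB Y)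
    (hcov : L ⊆ ⋃₀ 𝓨) : ∃ Y ∈ 𝓨, ∃ L', IsOrthantOfRank L' r ∧ L' ⊆ L ∩ Y := by
  classical
  obtain ⟨b, hbr, rfl⟩ := orthant_eq_box hL
  have hchoice : ∀ Y : Set (Fin N → ℤ), ∃ T : Set (Box N), T.Finite ∧
      (Y ∈ 𝓨 → bSet b ∩ Y = ⋃ c ∈ T, bSet c) := by
    intro Y
    by_cases hY : Y ∈ 𝓨
    · obtain ⟨T, hT, hTeq⟩ := ob_inter (ob_of_box b) (hOB Y hY)
      exact ⟨T, hT, fun _ => hTeq⟩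
    · exact ⟨∅, Set.finite_empty, fun h => absurd h hY⟩
  choose T hTf hTeq using hchoice
  have hT'f : (⋃ Y ∈ 𝓨, T Y).Finite := h𝓨.biUnion fun Y _ => hTf Y
  have hsub : ∀ c ∈ ⋃ Y ∈ 𝓨, T Y, bSet c ⊆ bSet b := by
    intro c hc
    obtain ⟨Y, hY, hcY⟩ := Set.mem_iUnion₂.mp hc
    intro x hx
    have hx2 : x ∈ ⋃ c ∈ T Y, bSet c := Set.mem_biUnion hcY hx
    rw [← hTeq Y hY] at hx2
    exact hx2.1
  have hcov' : bSet b ⊆ ⋃ c ∈ ⋃ Y ∈ 𝓨, T Y, bSet c := by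
    intro x hx
    obtain ⟨Y, hY, hxY⟩ := hcov hx
    have hx2 : x ∈ ⋃ c ∈ T Y, bSet c := by rw [← hTeq Y hY]; exact ⟨hx, hxY⟩
    obtain ⟨c, hc, hxc⟩ := Set.mem_iUnion₂.mp hx2
    exact Set.mem_iUnion₂.mpr ⟨c, Set.mem_iUnion₂.mpr ⟨Y, hY, hc⟩, hxc⟩
  obtain ⟨c, hc, hcrank⟩ := box_cover hT'f hsub hcov'
  obtain ⟨Y, hY, hcY⟩ := Set.mem_iUnion₂.mp hc
  refine ⟨Y, hY, bSet c, ?_, ?_⟩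
  · have := box_is_orthant c
    rwa [hcrank, hbr] at this
  · intro x hx
    have hx2 : x ∈ ⋃ c ∈ T Y, bSet c := Set.mem_biUnion hcY hx
    rw [← hTeq Y hY] at hx2
    exact hx2

end Cover


section Isometry

variable {N : ℕ}

lemma isOrthMat_mul {A B : Matrix (Fin N) (Fin N) ℤ} (hA : IsOrthMat A) (hB : IsOrthMat B) :
    IsOrthMat (A * B) := by
  unfold IsOrthMat at *
  rw [Matrix.transpose_mul, ← Matrix.mul_assoc, Matrix.mul_assoc A B, hB, Matrix.mul_one, hA]

lemma isOrthMat_transpose {A : Matrix (Fin N) (Fin N) ℤ} (hA : IsOrthMat A) :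
    IsOrthMat A.transpose := by
  unfold IsOrthMat at *
  rw [Matrix.transpose_transpose]
  exact mul_eq_one_comm.mp hA

lemma isOrthant_affine_image {L : Set (Fin N → ℤ)} {r : ℕ} (hL : IsOrthantOfRank L r)
    {a : Fin N → ℤ} {A : Matrix (Fin N) (Fin N) ℤ} (hA : IsOrthMat A) :
    IsOrthantOfRank ((fun x => a + A.mulVec x) '' L) r := by
  obtain ⟨a', A', Y, hA', hY, rfl⟩ := hL
  refine ⟨a + A.mulVec a', A * A', Y, isOrthMat_mul hA hA', hY, ?_⟩
  rw [Set.image_image]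
  apply Set.image_congr
  intro v _
  rw [Matrix.mulVec_add, Matrix.mulVec_mulVec, add_assoc]

lemma image_orthant_of_isometricOn {f : (Fin N → ℤ) → (Fin N → ℤ)} {P M : Set (Fin N → ℤ)}
    {r : ℕ} (hiso : IsometricOn f P) (hM : M ⊆ P) (h : IsOrthantOfRank M r) :
    IsOrthantOfRank (f '' M) r := by
  obtain ⟨a, A, hA, hfa⟩ := hiso
  have himg : f '' M = (fun x => a + A.mulVec x) '' M :=
    Set.image_congr fun x hx => hfa x (hM hx)
  rw [himg]
  exact isOrthant_affine_image h hA

lemma preimage_orthant {f : (Fin N → ℤ) → (Fin N → ℤ)} {P D M' : Set (Fin N → ℤ)} {r : ℕ}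
    (hiso : IsometricOn f P) (hM' : M' ⊆ f '' (P ∩ D)) (hr : IsOrthantOfRank M' r) :
    ∃ W, IsOrthantOfRank W r ∧ W ⊆ P ∩ D ∧ f '' W = M' := by
  obtain ⟨a, A, hA, hfa⟩ := hiso
  set e : (Fin N → ℤ) → (Fin N → ℤ) :=
    fun y => -(A.transpose.mulVec a) + A.transpose.mulVec y with he
  have hef : ∀ x ∈ P, e (f x) = x := by
    intro x hx
    rw [hfa x hx, he]
    simp only
    rw [Matrix.mulVec_add, Matrix.mulVec_mulVec, mul_eq_one_comm.mp hA,
      Matrix.one_mulVec]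
    abel
  have hWsub : e '' M' ⊆ P ∩ D := by
    rintro w ⟨y, hy, rfl⟩
    obtain ⟨x, hxPD, rfl⟩ := hM' hy
    rw [hef x hxPD.1]
    exact hxPD
  have hfW : f '' (e '' M') = M' := by
    ext y
    constructor
    · rintro ⟨w, ⟨y', hy', rfl⟩, rfl⟩
      obtain ⟨x, hxPD, rfl⟩ := hM' hy'
      rw [hef x hxPD.1]
      exact hy'
    · intro hy
      obtain ⟨x, hxPD, rfl⟩ := hM' hy
      exact ⟨e (f x), ⟨f x, hy, rfl⟩, by rw [hef x hxPD.1]⟩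
  refine ⟨e '' M', ?_, hWsub, hfW⟩
  exact isOrthant_affine_image hr (isOrthMat_transpose hA)

lemma ob_image_isometric {P X : Set (Fin N → ℤ)} {f : (Fin N → ℤ) → (Fin N → ℤ)}
    (hiso : IsometricOn f P) (hX : OB X) (hXP : X ⊆ P) : OB (f '' X) := by
  obtain ⟨T, hT, rfl⟩ := hX
  rw [Set.image_iUnion₂]
  refine ob_biUnion hT fun c hc => ?_
  have hsub1 : bSet c ⊆ ⋃ c ∈ T, bSet c := fun x hx => Set.mem_biUnion hc hx
  have hsub : bSet c ⊆ P := hsub1.trans hXP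
  exact ob_of_orthant ⟨_, image_orthant_of_isometricOn hiso hsub (box_is_orthant c)⟩

variable {𝓟 : Set (Set (Fin N → ℤ))} {S D : Set (Fin N → ℤ)} {f : (Fin N → ℤ) → (Fin N → ℤ)}

lemma pieces_cover (h𝓟f : 𝓟.Finite) (h𝓟o : ∀ P ∈ 𝓟, IsOrthant P) (hSU : S = ⋃₀ 𝓟)
    (hD : OB D) (hDS : D ⊆ S) {r : ℕ} {L : Set (Fin N → ℤ)}
    (hL : IsOrthantOfRank L r) (hLD : L ⊆ D) :
    ∃ P L', P ∈ 𝓟 ∧ IsOrthantOfRank L' r ∧ L' ⊆ L ∧ L' ⊆ P ∧ L' ⊆ D := by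
  have hcov : L ⊆ ⋃₀ ((fun P => P ∩ D) '' 𝓟) := by
    intro x hx
    have hxS : x ∈ ⋃₀ 𝓟 := by rw [← hSU]; exact hDS (hLD hx)
    obtain ⟨P, hP, hxP⟩ := hxS
    exact ⟨P ∩ D, ⟨P, hP, rfl⟩, hxP, hLD hx⟩
  obtain ⟨Y, hY, L', hL', hL's⟩ := orthant_cover hL (h𝓟f.image _)
    (by rintro Y ⟨P, hP, rfl⟩; exact ob_inter (ob_of_orthant (h𝓟o P hP)) hD) hcov
  obtain ⟨P, hP, rfl⟩ := hY
  exact ⟨P, L', hP, hL', hL's.trans Set.inter_subset_left,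
    (hL's.trans Set.inter_subset_right).trans Set.inter_subset_left,
    (hL's.trans Set.inter_subset_right).trans Set.inter_subset_right⟩

lemma image_cover_pullback (h𝓟f : 𝓟.Finite) (h𝓟o : ∀ P ∈ 𝓟, IsOrthant P) (hSU : S = ⋃₀ 𝓟)
    (hiso : ∀ P ∈ 𝓟, IsometricOn f P) (hD : OB D) (hDS : D ⊆ S) {r : ℕ}
    {M : Set (Fin N → ℤ)} (hM : IsOrthantOfRank M r) (hME : M ⊆ f '' D) :
    ∃ W M', IsOrthantOfRank W r ∧ W ⊆ D ∧ IsOrthantOfRank M' r ∧ M' ⊆ M ∧ f '' W = M' := by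
  have hcov : M ⊆ ⋃₀ ((fun P => f '' (P ∩ D)) '' 𝓟) := by
    intro y hy
    obtain ⟨x, hxD, rfl⟩ := hME hy
    obtain ⟨P, hP, hxP⟩ : ∃ P ∈ 𝓟, x ∈ P := by
      have : x ∈ ⋃₀ 𝓟 := by rw [← hSU]; exact hDS hxD
      exact this
    exact ⟨f '' (P ∩ D), ⟨P, hP, rfl⟩, Set.mem_image_of_mem f ⟨hxP, hxD⟩⟩
  obtain ⟨Y, hY, M', hM', hM's⟩ := orthant_cover hM (h𝓟f.image _)
    (by
      rintro Y ⟨P, hP, rfl⟩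
      exact ob_image_isometric (hiso P hP) (ob_inter (ob_of_orthant (h𝓟o P hP)) hD)
        Set.inter_subset_left) hcov
  obtain ⟨P, hP, rfl⟩ := hY
  obtain ⟨W, hW, hWPD, hfW⟩ :=
    preimage_orthant (hiso P hP) (hM's.trans Set.inter_subset_right) hM'
  exact ⟨W, M', hW, hWPD.trans Set.inter_subset_right, hM',
    hM's.trans Set.inter_subset_left, hfW⟩

lemma ob_image_of_pieces (hf : IsPeiMapOn S f) (hD : OB D) (hDS : D ⊆ S) : OB (f '' D) := by
  obtain ⟨𝓟, h𝓟f, h𝓟o, hSU, -, hiso⟩ := hf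
  have hDeq : D = ⋃ P ∈ 𝓟, (P ∩ D) := by
    ext x
    simp only [Set.mem_iUnion, exists_prop, Set.mem_inter_iff]
    constructor
    · intro hx
      have hxS : x ∈ ⋃₀ 𝓟 := by rw [← hSU]; exact hDS hx
      obtain ⟨P, hP, hxP⟩ := hxS
      exact ⟨P, hP, hxP, hx⟩
    · rintro ⟨P, hP, hxP, hx⟩; exact hx
  rw [hDeq, Set.image_iUnion₂]
  refine ob_biUnion h𝓟f fun P hP => ?_
  exact ob_image_isometric (hiso P hP) (ob_inter (ob_of_orthant (h𝓟o P hP)) hD)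
    Set.inter_subset_left

lemma rank_image_le (hf : IsPeiMapOn S f) (hD : OB D) (hDS : D ⊆ S) :
    orthRank (f '' D) ≤ orthRank D := by
  obtain ⟨𝓟, h𝓟f, h𝓟o, hSU, -, hiso⟩ := hf
  refine orthRank_le ?_
  rintro j ⟨M, hM, hME⟩
  obtain ⟨W, M', hW, hWD, -, -, -⟩ :=
    image_cover_pullback h𝓟f h𝓟o hSU hiso hD hDS hM hME
  exact le_orthRank ⟨W, hW, hWD⟩

end Isometry


section GermSum

attribute [local instance] Classical.propDecidable

variable {N : ℕ}

lemma germOf_sound {X : Set (Fin N → ℤ)} {r : ℕ} {L M : germSet X r}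
    (h : Commensurable L.1 M.1) : germOf X r L = germOf X r M := Quot.sound h

def sideO (r : ℕ) (X L : Set (Fin N → ℤ)) : Prop :=
  ∃ Z, IsOrthantOfRank Z r ∧ Z ⊆ L ∩ X

noncomputable def repO (r : ℕ) (X L : Set (Fin N → ℤ)) : Set (Fin N → ℤ) :=
  if h : sideO r X L then h.choose else ∅

lemma repO_spec {r : ℕ} {X L : Set (Fin N → ℤ)} (h : sideO r X L) :
    IsOrthantOfRank (repO r X L) r ∧ repO r X L ⊆ L ∩ X := by
  rw [repO, dif_pos h]
  exact h.choose_spec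

/-- The candidate germ of `X` determined by an orthant `L`. -/
noncomputable def gOpt (X : Set (Fin N → ℤ)) (r : ℕ) (L : Set (Fin N → ℤ)) :
    Option (Germ X r) :=
  if h : sideO r X L then
    some (germOf X r ⟨repO r X L, (repO_spec h).1, (repO_spec h).2.trans Set.inter_subset_right⟩)
  else none

lemma germOf_meet {X L : Set (Fin N → ℤ)} {r : ℕ} (hL : IsOrthantOfRank L r)
    {Z₁ Z₂ : Set (Fin N → ℤ)} (h₁ : IsOrthantOfRank Z₁ r) (h₂ : IsOrthantOfRank Z₂ r)
    (s₁ : Z₁ ⊆ L) (s₂ : Z₂ ⊆ L) (hX₁ : Z₁ ⊆ X) (hX₂ : Z₂ ⊆ X) :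
    germOf X r ⟨Z₁, h₁, hX₁⟩ = germOf X r ⟨Z₂, h₂, hX₂⟩ := by
  obtain ⟨W, hW, hWs⟩ := orthant_meet hL h₁ h₂ s₁ s₂
  have hWX : W ⊆ X := (hWs.trans Set.inter_subset_left).trans hX₁
  have e₁ : germOf X r ⟨Z₁, h₁, hX₁⟩ = germOf X r ⟨W, hW, hWX⟩ :=
    Quot.sound (comm_of_sub h₁ hW (hWs.trans Set.inter_subset_left))
  have e₂ : germOf X r ⟨Z₂, h₂, hX₂⟩ = germOf X r ⟨W, hW, hWX⟩ :=
    Quot.sound (comm_of_sub h₂ hW (hWs.trans Set.inter_subset_right))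
  rw [e₁, e₂]

lemma sideO_of_sub {r : ℕ} {X L Z : Set (Fin N → ℤ)} (hZL : Z ⊆ L) (h : sideO r X Z) :
    sideO r X L := by
  obtain ⟨W, hW, hWs⟩ := h
  exact ⟨W, hW, hWs.trans (Set.inter_subset_inter_left X hZL)⟩

lemma sideO_to_sub {r : ℕ} {X L Z : Set (Fin N → ℤ)} (hL : IsOrthantOfRank L r)
    (hZ : IsOrthantOfRank Z r) (hZL : Z ⊆ L) (h : sideO r X L) : sideO r X Z := by
  obtain ⟨W, hW, hWs⟩ := h
  obtain ⟨U, hU, hUs⟩ := orthant_meet hL hZ hW hZL (hWs.trans Set.inter_subset_left)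
  exact ⟨U, hU, Set.subset_inter (hUs.trans Set.inter_subset_left)
    ((hUs.trans Set.inter_subset_right).trans (hWs.trans Set.inter_subset_right))⟩

lemma gOpt_sub {X L Z : Set (Fin N → ℤ)} {r : ℕ} (hL : IsOrthantOfRank L r)
    (hZ : IsOrthantOfRank Z r) (hZL : Z ⊆ L) : gOpt X r L = gOpt X r Z := by
  by_cases h : sideO r X Z
  · have hLside : sideO r X L := sideO_of_sub hZL h
    rw [gOpt, gOpt, dif_pos h, dif_pos hLside]
    congr 1
    have hrepL := repO_spec hLside
    have hrepZ := repO_spec h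
    exact germOf_meet hL hrepL.1 hrepZ.1 (hrepL.2.trans Set.inter_subset_left)
      ((hrepZ.2.trans Set.inter_subset_left).trans hZL)
      (hrepL.2.trans Set.inter_subset_right) (hrepZ.2.trans Set.inter_subset_right)
  · have hLside : ¬ sideO r X L := fun h' => h (sideO_to_sub hL hZ hZL h')
    rw [gOpt, gOpt, dif_neg h, dif_neg hLside]

lemma gOpt_comm {X : Set (Fin N → ℤ)} {r : ℕ} {L M : Set (Fin N → ℤ)}
    (hL : IsOrthantOfRank L r) (hM : IsOrthantOfRank M r) (hcomm : Commensurable L M) :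
    gOpt X r L = gOpt X r M := by
  obtain ⟨Z, hZ, hZs⟩ := comm_attain hL hcomm
  rw [gOpt_sub hL hZ (hZs.trans Set.inter_subset_left),
    gOpt_sub hM hZ (hZs.trans Set.inter_subset_right)]

lemma gOpt_eqvGen {C X : Set (Fin N → ℤ)} {r : ℕ} {L M : germSet C r}
    (h : Relation.EqvGen (fun L M : germSet C r => Commensurable L.1 M.1) L M) :
    gOpt X r L.1 = gOpt X r M.1 := by
  induction h with
  | rel L M h => exact gOpt_comm L.2.1 M.2.1 h
  | refl L => rfl
  | symm L M h ih => exact ih.symm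
  | trans L M P h1 h2 ih1 ih2 => exact ih1.trans ih2

lemma gOpt_self {X : Set (Fin N → ℤ)} {r : ℕ} (L : germSet X r) :
    gOpt X r L.1 = some (germOf X r L) := by
  have hside : sideO r X L.1 := ⟨L.1, L.2.1, Set.subset_inter subset_rfl L.2.2⟩
  rw [gOpt, dif_pos hside]
  congr 1
  have hrep := repO_spec hside
  exact (germOf_sound (L := L) (comm_of_sub L.2.1 hrep.1 (hrep.2.trans Set.inter_subset_left))).symm

lemma gOpt_none {X : Set (Fin N → ℤ)} {r : ℕ} {L : Set (Fin N → ℤ)}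
    (hd : ∀ Z, IsOrthantOfRank Z r → ¬ Z ⊆ L ∩ X) : gOpt X r L = none := by
  rw [gOpt, dif_neg]
  rintro ⟨Z, hZ, hZs⟩
  exact hd Z hZ hZs

lemma germ_sum_equiv {A B : Set (Fin N → ℤ)} (hA : OB A) (hB : OB B)
    (hd : Disjoint A B) (r : ℕ) :
    Nonempty (Germ (A ∪ B) r ≃ Germ A r ⊕ Germ B r) := by
  classical
  let ia : Germ A r → Germ (A ∪ B) r := Quot.map
    (fun L => (⟨L.1, L.2.1, L.2.2.trans Set.subset_union_left⟩ : germSet (A ∪ B) r))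
    (fun _ _ h => h)
  let ib : Germ B r → Germ (A ∪ B) r := Quot.map
    (fun L => (⟨L.1, L.2.1, L.2.2.trans Set.subset_union_right⟩ : germSet (A ∪ B) r))
    (fun _ _ h => h)
  have hnoneB : ∀ L : germSet A r, gOpt B r L.1 = none := by
    intro L
    refine gOpt_none fun Z hZ hZs => ?_
    obtain ⟨x, hx⟩ := orthant_nonempty hZ
    exact Set.disjoint_left.mp hd (L.2.2 (hZs hx).1) (hZs hx).2
  have hnoneA : ∀ L : germSet B r, gOpt A r L.1 = none := by
    intro L
    refine gOpt_none fun Z hZ hZs => ?_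
    obtain ⟨x, hx⟩ := orthant_nonempty hZ
    exact Set.disjoint_left.mp hd (hZs hx).2 (L.2.2 (hZs hx).1)
  refine ⟨(Equiv.ofBijective (Sum.elim ia ib) ⟨?_, ?_⟩).symm⟩
  · rintro (p | p) (q | q) hpq
    · induction p using Quot.ind with | _ L =>
      induction q using Quot.ind with | _ M =>
      have hEq := Quot.eq.mp hpq
      have := @gOpt_eqvGen N (A ∪ B) A r _ _ hEq
      rw [gOpt_self L, gOpt_self M] at this
      exact congrArg Sum.inl (Option.some_inj.mp this)
    · exfalso
      induction p using Quot.ind with | _ L =>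
      induction q using Quot.ind with | _ M =>
      have hEq := Quot.eq.mp hpq
      have := @gOpt_eqvGen N (A ∪ B) B r _ _ hEq
      rw [hnoneB L, gOpt_self M] at this
      simp at this
    · exfalso
      induction p using Quot.ind with | _ L =>
      induction q using Quot.ind with | _ M =>
      have hEq := Quot.eq.mp hpq
      have := @gOpt_eqvGen N (A ∪ B) B r _ _ hEq
      rw [gOpt_self L, hnoneB M] at this
      simp at this
    · induction p using Quot.ind with | _ L =>
      induction q using Quot.ind with | _ M =>
      have hEq := Quot.eq.mp hpq
      have := @gOpt_eqvGen N (A ∪ B) B r _ _ hEq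
      rw [gOpt_self L, gOpt_self M] at this
      exact congrArg Sum.inr (Option.some_inj.mp this)
  · intro q
    induction q using Quot.ind with | _ L =>
    have hcov : L.1 ⊆ ⋃₀ {A, B} := by
      rw [Set.sUnion_pair]
      exact L.2.2
    obtain ⟨Y, hY, L', hL', hL's⟩ := orthant_cover L.2.1
      ((Set.finite_singleton B).insert A)
      (by
        intro Y hY
        rcases hY with rfl | hY
        · exact hA
        · rw [Set.mem_singleton_iff] at hY; subst hY; exact hB) hcov
    rcases hY with rfl | hY
    · exact ⟨Sum.inl (germOf Y r ⟨L', hL', hL's.trans Set.inter_subset_right⟩),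
        (germOf_sound (L := L)
          (M := ⟨L', hL', ((hL's.trans Set.inter_subset_right).trans Set.subset_union_left)⟩)
          (comm_of_sub L.2.1 hL' (hL's.trans Set.inter_subset_left))).symm⟩
    · rw [Set.mem_singleton_iff] at hY
      subst hY
      exact ⟨Sum.inr (germOf Y r ⟨L', hL', hL's.trans Set.inter_subset_right⟩),
        (germOf_sound (L := L)
          (M := ⟨L', hL', ((hL's.trans Set.inter_subset_right).trans Set.subset_union_right)⟩)
          (comm_of_sub L.2.1 hL' (hL's.trans Set.inter_subset_left))).symm⟩

end GermSum


section GermImage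

variable {N : ℕ}

lemma germ_image_equiv {S D : Set (Fin N → ℤ)} {f : (Fin N → ℤ) → (Fin N → ℤ)}
    (hf : IsPeiMapOn S f) (hfi : Set.InjOn f S) (hD : OB D) (hDS : D ⊆ S) (r : ℕ) :
    Nonempty (Germ D r ≃ Germ (f '' D) r) := by
  classical
  obtain ⟨𝓟, h𝓟f, h𝓟o, hSU, hdisj, hiso⟩ := hf
  have hinjsub : ∀ X Y : Set (Fin N → ℤ), X ⊆ S → Y ⊆ S → f '' X ⊆ f '' Y → X ⊆ Y := by
    intro X Y hXS hYS h x hx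
    obtain ⟨y, hy, hxy⟩ := h (Set.mem_image_of_mem f hx)
    rwa [← hfi (hYS hy) (hXS hx) hxy]
  -- key commensurability of images
  have key1 : ∀ (L L₁ L₂ P₁ P₂ : Set (Fin N → ℤ)), P₁ ∈ 𝓟 → P₂ ∈ 𝓟 →
      IsOrthantOfRank L r → IsOrthantOfRank L₁ r → IsOrthantOfRank L₂ r →
      L₁ ⊆ L → L₁ ⊆ P₁ → L₂ ⊆ L → L₂ ⊆ P₂ →
      Commensurable (f '' L₁) (f '' L₂) := by
    intro L L₁ L₂ P₁ P₂ hP₁ hP₂ hL h₁ h₂ s₁ s₁P s₂ s₂P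
    obtain ⟨Z, hZ, hZs⟩ := orthant_meet hL h₁ h₂ s₁ s₂
    have hZ1 : Z ⊆ L₁ := hZs.trans Set.inter_subset_left
    have hfZ : IsOrthantOfRank (f '' Z) r :=
      image_orthant_of_isometricOn (hiso P₁ hP₁) (hZ1.trans s₁P) hZ
    have hf1 : IsOrthantOfRank (f '' L₁) r :=
      image_orthant_of_isometricOn (hiso P₁ hP₁) s₁P h₁
    have hf2 : IsOrthantOfRank (f '' L₂) r :=
      image_orthant_of_isometricOn (hiso P₂ hP₂) s₂P h₂
    have hsub : f '' Z ⊆ f '' L₁ ∩ f '' L₂ :=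
      Set.subset_inter (Set.image_mono hZ1)
        (Set.image_mono (hZs.trans Set.inter_subset_right))
    have hrank : orthRank (f '' L₁ ∩ f '' L₂) = r :=
      le_antisymm ((orthRank_mono Set.inter_subset_left).trans
          (le_of_eq (orthRank_orthant hf1)))
        (le_orthRank ⟨f '' Z, hfZ, hsub⟩)
    exact ⟨(orthant_nonempty hfZ).mono hsub,
      by rw [orthRank_orthant hf1, hrank], by rw [orthRank_orthant hf2, hrank]⟩
  -- the forward map
  choose Pf Lf hPf hLfr hLfL hLfP hLfD using
    fun L : germSet D r => pieces_cover h𝓟f h𝓟o hSU hD hDS L.2.1 L.2.2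
  have hfLf : ∀ L : germSet D r, IsOrthantOfRank (f '' Lf L) r := fun L =>
    image_orthant_of_isometricOn (hiso _ (hPf L)) (hLfP L) (hLfr L)
  have hfLfE : ∀ L : germSet D r, f '' Lf L ⊆ f '' D := fun L =>
    Set.image_mono (hLfD L)
  set φ₀ : germSet D r → Germ (f '' D) r :=
    fun L => germOf (f '' D) r ⟨f '' Lf L, hfLf L, hfLfE L⟩ with hφ₀def
  have hφ₀ : ∀ L M : germSet D r, Commensurable L.1 M.1 → φ₀ L = φ₀ M := by
    intro L M hcomm
    obtain ⟨Z, hZ, hZs⟩ := comm_attain L.2.1 hcomm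
    have hZD : Z ⊆ D := (hZs.trans Set.inter_subset_left).trans L.2.2
    obtain ⟨P₃, Z', hP₃, hZ', hZ'Z, hZ'P, hZ'D⟩ :=
      pieces_cover h𝓟f h𝓟o hSU hD hDS hZ hZD
    have c1 : Commensurable (f '' Lf L) (f '' Z') :=
      key1 L.1 (Lf L) Z' _ _ (hPf L) hP₃ L.2.1 (hLfr L) hZ' (hLfL L) (hLfP L)
        (hZ'Z.trans (hZs.trans Set.inter_subset_left)) hZ'P
    have c2 : Commensurable (f '' Lf M) (f '' Z') :=
      key1 M.1 (Lf M) Z' _ _ (hPf M) hP₃ M.2.1 (hLfr M) hZ' (hLfL M) (hLfP M)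
        (hZ'Z.trans (hZs.trans Set.inter_subset_right)) hZ'P
    have hfZ' : IsOrthantOfRank (f '' Z') r :=
      image_orthant_of_isometricOn (hiso _ hP₃) hZ'P hZ'
    have hfZ'E : f '' Z' ⊆ f '' D := Set.image_mono hZ'D
    calc φ₀ L = germOf (f '' D) r ⟨f '' Z', hfZ', hfZ'E⟩ := germOf_sound c1
      _ = φ₀ M := (germOf_sound c2).symm
  set φ : Germ D r → Germ (f '' D) r := Quot.lift φ₀ hφ₀ with hφdef
  -- the backward map
  choose Wg Mg hWgr hWgD hMgr hMgM hfWg using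
    fun M : germSet (f '' D) r =>
      image_cover_pullback h𝓟f h𝓟o hSU hiso hD hDS M.2.1 M.2.2
  set ψ₀ : germSet (f '' D) r → Germ D r :=
    fun M => germOf D r ⟨Wg M, hWgr M, hWgD M⟩ with hψ₀def
  have hψ₀ : ∀ L M : germSet (f '' D) r, Commensurable L.1 M.1 → ψ₀ L = ψ₀ M := by
    intro L M hcomm
    obtain ⟨Z, hZ, hZs⟩ := comm_attain L.2.1 hcomm
    have hZE : Z ⊆ f '' D := (hZs.trans Set.inter_subset_left).trans L.2.2
    obtain ⟨V, Z', hV, hVD, hZ', hZ'Z, hfV⟩ :=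
      image_cover_pullback h𝓟f h𝓟o hSU hiso hD hDS hZ hZE
    have step : ∀ K : germSet (f '' D) r, Z' ⊆ K.1 → ψ₀ K = germOf D r ⟨V, hV, hVD⟩ := by
      intro K hZ'K
      obtain ⟨U, hU, hUs⟩ := orthant_meet K.2.1 (hMgr K) hZ' (hMgM K) hZ'K
      have hUE : U ⊆ f '' D := (hUs.trans Set.inter_subset_left).trans
        (by rw [← hfWg K]; exact Set.image_mono (hWgD K))
      obtain ⟨V'', U', hV'', hV''D, hU', hU'U, hfV''⟩ :=
        image_cover_pullback h𝓟f h𝓟o hSU hiso hD hDS hU hUE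
      have h1 : V'' ⊆ Wg K := by
        refine hinjsub _ _ (hV''D.trans hDS) ((hWgD K).trans hDS) ?_
        rw [hfV'', hfWg K]
        exact hU'U.trans (hUs.trans Set.inter_subset_left)
      have h2 : V'' ⊆ V := by
        refine hinjsub _ _ (hV''D.trans hDS) (hVD.trans hDS) ?_
        rw [hfV'', hfV]
        exact hU'U.trans (hUs.trans Set.inter_subset_right)
      calc ψ₀ K = germOf D r ⟨V'', hV'', hV''D⟩ :=
            germOf_sound (comm_of_sub (hWgr K) hV'' h1)
        _ = germOf D r ⟨V, hV, hVD⟩ := (germOf_sound (comm_of_sub hV hV'' h2)).symm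
    exact (step L (hZ'Z.trans (hZs.trans Set.inter_subset_left))).trans
      (step M (hZ'Z.trans (hZs.trans Set.inter_subset_right))).symm
  set ψ : Germ (f '' D) r → Germ D r := Quot.lift ψ₀ hψ₀ with hψdef
  have hψφ : ∀ L : germSet D r, ψ (φ (germOf D r L)) = germOf D r L := by
    intro L
    rw [hψdef, hφdef]
    show ψ₀ ⟨f '' Lf L, hfLf L, hfLfE L⟩ = germOf D r L
    set K : germSet (f '' D) r := ⟨f '' Lf L, hfLf L, hfLfE L⟩ with hKdef
    have h1 : Wg K ⊆ Lf L := by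
      refine hinjsub _ _ ((hWgD K).trans hDS) ((hLfD L).trans hDS) ?_
      rw [hfWg K]
      exact hMgM K
    exact (germOf_sound (comm_of_sub L.2.1 (hWgr K) (h1.trans (hLfL L)))).symm
  have hφψ : ∀ M : germSet (f '' D) r, φ (ψ (germOf (f '' D) r M)) = germOf (f '' D) r M := by
    intro M
    rw [hφdef, hψdef]
    show φ₀ ⟨Wg M, hWgr M, hWgD M⟩ = germOf (f '' D) r M
    set W : germSet D r := ⟨Wg M, hWgr M, hWgD M⟩ with hWdef
    have h1 : f '' Lf W ⊆ M.1 := by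
      have h2 : f '' Lf W ⊆ f '' Wg M := Set.image_mono (hLfL W)
      rw [hfWg M] at h2
      exact h2.trans (hMgM M)
    exact (germOf_sound (comm_of_sub M.2.1 (hfLf W) h1)).symm
  exact ⟨⟨φ, ψ,
    fun q => Quot.inductionOn (motive := fun q => ψ (φ q) = q) q hψφ,
    fun q => Quot.inductionOn (motive := fun q => φ (ψ q) = q) q hφψ⟩⟩

lemma germ_finite {X : Set (Fin N → ℤ)} {r : ℕ} (hX : OB X) (hr : orthRank X ≤ r) :
    Finite (Germ X r) := by
  classical
  obtain ⟨T, hT, rfl⟩ := hX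
  set X := ⋃ b ∈ T, bSet b with hXdef
  have hbsub : ∀ c ∈ T, bSet c ⊆ X := fun c hc x hx => Set.mem_biUnion hc hx
  have hGorth : ∀ c : Box N, c ∈ T ∧ brank c = r → IsOrthantOfRank (bSet c) r := by
    rintro c ⟨hc, hcr⟩
    rw [← hcr]
    exact box_is_orthant c
  have key : ∀ q : Germ X r, ∃ c : {c : Box N // c ∈ T ∧ brank c = r}, q = germOf X r
      ⟨bSet c.1, hGorth c.1 c.2, hbsub c.1 c.2.1⟩ := by
    intro q
    induction q using Quot.ind with | _ L =>
    have hcov : L.1 ⊆ ⋃₀ (bSet '' T) := by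
      intro x hx
      obtain ⟨c, hc, hxc⟩ := Set.mem_iUnion₂.mp (L.2.2 hx)
      exact ⟨bSet c, ⟨c, hc, rfl⟩, hxc⟩
    obtain ⟨Y, hY, L', hL', hL's⟩ := orthant_cover L.2.1 (hT.image _)
      (by rintro Y ⟨c, hc, rfl⟩; exact ob_of_box c) hcov
    obtain ⟨c, hc, rfl⟩ := hY
    have hcr : brank c = r := by
      refine le_antisymm ?_ ?_
      · rw [← orthRank_orthant (box_is_orthant c)]
        exact (orthRank_mono (hbsub c hc)).trans hr
      · exact orthant_rank_le hL' (box_is_orthant c) (hL's.trans Set.inter_subset_right)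
    refine ⟨⟨c, hc, hcr⟩, ?_⟩
    have e1 : germOf X r L = germOf X r
        ⟨L', hL', (hL's.trans Set.inter_subset_left).trans L.2.2⟩ :=
      germOf_sound (comm_of_sub L.2.1 hL' (hL's.trans Set.inter_subset_left))
    have e2 : germOf X r ⟨bSet c, hGorth c ⟨hc, hcr⟩, hbsub c hc⟩
        = germOf X r ⟨L', hL', (hL's.trans Set.inter_subset_left).trans L.2.2⟩ :=
      germOf_sound (comm_of_sub (hGorth c ⟨hc, hcr⟩) hL'
        (hL's.trans Set.inter_subset_right))
    exact e1.trans e2.symm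
  choose cOf hcOf using key
  have hGfin : Finite {c : Box N // c ∈ T ∧ brank c = r} :=
    (hT.subset (fun c hc => hc.1 : {c : Box N | c ∈ T ∧ brank c = r} ⊆ T)).to_subtype
  refine Finite.of_surjective (fun c : {c : Box N // c ∈ T ∧ brank c = r} => germOf X r
    ⟨bSet c.1, hGorth c.1 c.2, hbsub c.1 c.2.1⟩) ?_
  intro q
  exact ⟨cOf q, (hcOf q).symm⟩

lemma rank_compl_le {S : Set (Fin N → ℤ)} {f : (Fin N → ℤ) → (Fin N → ℤ)}
    (hS : OB S) (hf : IsPeiMapOn S f) (hfi : Set.InjOn f S) (hfS : f '' S ⊆ S) :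
    orthRank (S \ f '' S) ≤ orthRank S - 1 := by
  classical
  set n := orthRank S with hn
  have hE : OB (f '' S) := ob_image_of_pieces hf hS subset_rfl
  have hdiff : OB (S \ f '' S) := ob_diff hS hE
  have hunion : f '' S ∪ (S \ f '' S) = S := Set.union_diff_cancel hfS
  have hdisj : Disjoint (f '' S) (S \ f '' S) := Set.disjoint_sdiff_right
  obtain ⟨e1⟩ := germ_sum_equiv hE hdiff hdisj n
  rw [hunion] at e1
  obtain ⟨e2⟩ := germ_image_equiv hf hfi hS subset_rfl n
  have hfin : Finite (Germ S n) := germ_finite hS le_rfl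
  have hfinsum : Finite (Germ (f '' S) n ⊕ Germ (S \ f '' S) n) := Finite.of_equiv _ e1
  have hfin1 : Finite (Germ (f '' S) n) := Finite.of_injective
    (Sum.inl : Germ (f '' S) n → Germ (f '' S) n ⊕ Germ (S \ f '' S) n) Sum.inl_injective
  have hfin2 : Finite (Germ (S \ f '' S) n) := Finite.of_injective
    (Sum.inr : Germ (S \ f '' S) n → Germ (f '' S) n ⊕ Germ (S \ f '' S) n) Sum.inr_injective
  have hcard : Nat.card (Germ S n) =
      Nat.card (Germ (f '' S) n) + Nat.card (Germ (S \ f '' S) n) := by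
    rw [Nat.card_congr e1, Nat.card_sum]
  have hcard2 : Nat.card (Germ S n) = Nat.card (Germ (f '' S) n) := Nat.card_congr e2
  have hzero : Nat.card (Germ (S \ f '' S) n) = 0 := by
    have hpos : 0 < Nat.card (Germ S n) ∨ Nat.card (Germ S n) = 0 := by omega
    omega
  have hempty : IsEmpty (Germ (S \ f '' S) n) := by
    rcases Nat.card_eq_zero.mp hzero with h | h
    · exact h
    · exact absurd h (not_infinite_iff_finite.mpr hfin2)
  refine orthRank_le ?_
  rintro j ⟨L, hL, hLs⟩
  have hjn : j ≤ n := le_orthRank ⟨L, hL, hLs.trans Set.diff_subset⟩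
  have hjne : j ≠ n := by
    rintro rfl
    exact hempty.elim (germOf _ _ ⟨L, hL, hLs⟩)
  omega

end GermImage

/-- heights of pei-injections are additive under composition:
`h(gf) = h(g) + h(f)` (here `gf` means `g` followed by `f`). -/
theorem stmt17 {N : ℕ} (S : Set (Fin N → ℤ)) (hS : IsOrthohedral S)
    (f g : (Fin N → ℤ) → (Fin N → ℤ))
    (hf : IsPeiMapOn S f) (hfi : Set.InjOn f S) (hfS : f '' S ⊆ S)
    (hg : IsPeiMapOn S g) (hgi : Set.InjOn g S) (hgS : g '' S ⊆ S) :
    heightAt (S \ (f '' (g '' S))) (orthRank S - 1)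
      = heightAt (S \ (g '' S)) (orthRank S - 1)
        + heightAt (S \ (f '' S)) (orthRank S - 1) := by
  classical
  have hOBS : OB S := ob_iff_orthohedral.mpr hS
  set n := orthRank S with hn
  have hDg : OB (S \ g '' S) := ob_diff hOBS (ob_image_of_pieces hg hOBS subset_rfl)
  have hDgS : (S \ g '' S) ⊆ S := Set.diff_subset
  have hA : OB (S \ f '' S) := ob_diff hOBS (ob_image_of_pieces hf hOBS subset_rfl)
  have hB : OB (f '' (S \ g '' S)) := ob_image_of_pieces hf hDg hDgS
  have hC : S \ f '' (g '' S) = (S \ f '' S) ∪ f '' (S \ g '' S) := by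
    apply Set.Subset.antisymm
    · rintro x ⟨hxS, hxn⟩
      by_cases hxf : x ∈ f '' S
      · obtain ⟨s, hsS, rfl⟩ := hxf
        exact Or.inr ⟨s, ⟨hsS, fun hs => hxn ⟨s, hs, rfl⟩⟩, rfl⟩
      · exact Or.inl ⟨hxS, hxf⟩
    · rintro x (⟨hxS, hxn⟩ | ⟨s, ⟨hsS, hsn⟩, rfl⟩)
      · exact ⟨hxS, fun h => hxn (Set.image_mono hgS h)⟩
      · refine ⟨hfS ⟨s, hsS, rfl⟩, ?_⟩
        rintro ⟨t, htg, htx⟩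
        have hts : t = s := hfi (hgS htg) hsS htx
        exact hsn (hts ▸ htg)
  have hdisj : Disjoint (S \ f '' S) (f '' (S \ g '' S)) := by
    rw [Set.disjoint_left]
    rintro x ⟨hxS, hxn⟩ ⟨s, hs, rfl⟩
    exact hxn ⟨s, hs.1, rfl⟩
  have hrA : orthRank (S \ f '' S) ≤ n - 1 := rank_compl_le hOBS hf hfi hfS
  have hrDg : orthRank (S \ g '' S) ≤ n - 1 := rank_compl_le hOBS hg hgi hgS
  have hrB : orthRank (f '' (S \ g '' S)) ≤ n - 1 :=
    (rank_image_le hf hDg hDgS).trans hrDg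
  obtain ⟨e1⟩ := germ_sum_equiv hA hB hdisj (n - 1)
  obtain ⟨e2⟩ := germ_image_equiv hf hfi hDg hDgS (n - 1)
  haveI hfinA : Finite (Germ (S \ f '' S) (n - 1)) := germ_finite hA hrA
  haveI hfinB : Finite (Germ (f '' (S \ g '' S)) (n - 1)) := germ_finite hB hrB
  show Nat.card (Germ (S \ f '' (g '' S)) (n - 1))
      = Nat.card (Germ (S \ g '' S) (n - 1)) + Nat.card (Germ (S \ f '' S) (n - 1))
  calc Nat.card (Germ (S \ f '' (g '' S)) (n - 1))
      = Nat.card (Germ ((S \ f '' S) ∪ f '' (S \ g '' S)) (n - 1)) := by rw [hC]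
    _ = Nat.card (Germ (S \ f '' S) (n - 1) ⊕ Germ (f '' (S \ g '' S)) (n - 1)) :=
        Nat.card_congr e1
    _ = Nat.card (Germ (S \ f '' S) (n - 1)) + Nat.card (Germ (f '' (S \ g '' S)) (n - 1)) :=
        Nat.card_sum
    _ = Nat.card (Germ (S \ f '' S) (n - 1)) + Nat.card (Germ (S \ g '' S) (n - 1)) := by
        rw [← Nat.card_congr e2]
    _ = Nat.card (Germ (S \ g '' S) (n - 1)) + Nat.card (Germ (S \ f '' S) (n - 1)) :=
        Nat.add_comm _ _

end PeiPaper
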